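/- arXiv:2212.13770 — 15 statements merged into one kernel-verified Lean document; each statement's English description precedes it below -/
import Mathlib

section
/- For any nontrivial finite group G, the geometric mean of the element orders of G divided by |G| satisfies 0 < l(G) ≤ ψ''(G) < 1, where l(G) = ρ(G)^(1/|G|)/|G| with ρ(G) the product of the orders of all elements of G, and ψ''(G) = ψ(G)/|G|^2 with ψ(G) the sum of the orders of all elements of G. -/
noncomputable def lfun (G : Type*) [Group G] [Fintype G] : ℝ :=
  ((∏ g : G, orderOf g : ℕ) : ℝ) ^ ((1 : ℝ) / (Fintype.card G : ℝ)) / (Fintype.card G : ℝ)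

noncomputable def psi2 (G : Type*) [Group G] [Fintype G] : ℝ :=
  ((∑ g : G, orderOf g : ℕ) : ℝ) / ((Fintype.card G : ℝ)) ^ 2

theorem stmt0 (G : Type*) [Group G] [Fintype G] [Nontrivial G] :
    0 < lfun G ∧ lfun G ≤ psi2 G ∧ psi2 G < 1 := by
  have hn2 : 2 ≤ Fintype.card G := Fintype.one_lt_card
  set n : ℕ := Fintype.card G with hn
  have hnpos : (0 : ℝ) < n := by positivity
  have hPpos : 0 < ∏ g : G, orderOf g :=
    Finset.prod_pos fun g _ => orderOf_pos g
  have hPposR : (0 : ℝ) < ((∏ g : G, orderOf g : ℕ) : ℝ) := by exact_mod_cast hPpos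
  have h1 : 0 < lfun G := by
    unfold lfun
    rw [← hn]
    positivity
  refine ⟨h1, ?_, ?_⟩
  · -- AM-GM
    have key : (∏ g : G, ((orderOf g : ℝ)) ^ ((1:ℝ)/n)) ≤
        ∑ g : G, ((1:ℝ)/n) * (orderOf g : ℝ) := by
      apply Real.geom_mean_le_arith_mean_weighted
      · intro i _; positivity
      · rw [Finset.sum_const, Finset.card_univ, ← hn, nsmul_eq_mul]
        field_simp
      · intro i _; positivity
    have hprod : (∏ g : G, ((orderOf g : ℝ)) ^ ((1:ℝ)/n))
        = ((∏ g : G, orderOf g : ℕ) : ℝ) ^ ((1:ℝ)/n) := by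
      rw [Nat.cast_prod, ← Real.finset_prod_rpow]
      intro i _; positivity
    have hsum : (∑ g : G, ((1:ℝ)/n) * (orderOf g : ℝ))
        = ((∑ g : G, orderOf g : ℕ) : ℝ) / n := by
      rw [← Finset.mul_sum, Nat.cast_sum]
      ring
    rw [hprod, hsum] at key
    unfold lfun psi2
    rw [← hn]
    rw [div_le_div_iff₀ hnpos (by positivity), sq]
    calc ((∏ g : G, orderOf g : ℕ) : ℝ) ^ ((1:ℝ)/n) * (n * n)
        = (((∏ g : G, orderOf g : ℕ) : ℝ) ^ ((1:ℝ)/n) * n) * n := by ring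
      _ ≤ (((∑ g : G, orderOf g : ℕ) : ℝ)) * n := by
          apply mul_le_mul_of_nonneg_right _ hnpos.le
          rw [← le_div_iff₀ hnpos] at *
          exact key
  · -- psi2 < 1
    have hS : (∑ g : G, orderOf g) < ∑ _g : G, n := by
      apply Finset.sum_lt_sum
      · intro i _; exact orderOf_le_card_univ
      · exact ⟨1, Finset.mem_univ _, by simp [orderOf_one]; omega⟩
    have hS' : (∑ g : G, orderOf g) < n * n := by
      simpa [Finset.sum_const, Finset.card_univ, ← hn, Nat.smul_one_eq_cast] using hS
    unfold psi2
    rw [← hn, div_lt_one (by positivity), sq]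
    exact_mod_cast hS'
end

section
/- Let G be a finite group and N a nontrivial proper normal subgroup of G. Then l(G) < l(G/N), where l(G) = ρ(G)^(1/|G|)/|G| and ρ(G) is the product of the orders of all elements of G. -/
open scoped Pointwise in
theorem stmt1 (G : Type*) [Group G] [Fintype G] (N : Subgroup G) [N.Normal]
    [Fintype (G ⧸ N)] (h1 : N ≠ ⊥) (h2 : N ≠ ⊤) :
    lfun G < lfun (G ⧸ N) := by
  classical
  haveI : Fintype N := Fintype.ofFinite N
  set n := Fintype.card N with hn
  have hn1 : 1 < n := by
    have := N.one_lt_card_iff_ne_bot.mpr h1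
    simpa [Nat.card_eq_fintype_card] using this
  have hcard : Fintype.card G = Fintype.card (G ⧸ N) * n := by
    have := Subgroup.card_eq_card_quotient_mul_card_subgroup N
    simpa [Nat.card_eq_fintype_card] using this
  -- pointwise key inequality
  have key : ∀ x : G, orderOf x ≤ orderOf (QuotientGroup.mk x : G ⧸ N) * n := by
    intro x
    set k := orderOf (QuotientGroup.mk x : G ⧸ N) with hk
    have hmem : x ^ k ∈ N := by
      rw [← QuotientGroup.eq_one_iff]
      simpa [hk] using pow_orderOf_eq_one (QuotientGroup.mk x : G ⧸ N)
    have hdvd : k ∣ orderOf x := by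
      apply orderOf_dvd_of_pow_eq_one
      have : ((x ^ orderOf x : G) : G ⧸ N) = ((1 : G) : G ⧸ N) := by
        rw [pow_orderOf_eq_one]
      simpa only [QuotientGroup.mk_pow, QuotientGroup.mk_one] using this
    have hk0 : k ≠ 0 := (orderOf_pos _).ne'
    have h2' : orderOf (x ^ k) = orderOf x / k := orderOf_pow_of_dvd hk0 hdvd
    have h3 : orderOf (x ^ k) ∣ n := by
      rw [← Subgroup.orderOf_mk (x ^ k) hmem]
      simpa [Nat.card_eq_fintype_card, hn] using
        orderOf_dvd_card (x := (⟨x ^ k, hmem⟩ : N))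
    calc orderOf x = k * (orderOf x / k) := (Nat.mul_div_cancel' hdvd).symm
      _ = k * orderOf (x ^ k) := by rw [h2']
      _ ≤ k * n := Nat.mul_le_mul_left _ (Nat.le_of_dvd (by omega) h3)
  -- strict inequality of products
  have hprodlt : (∏ x : G, orderOf x) <
      ∏ x : G, (orderOf (QuotientGroup.mk x : G ⧸ N) * n) := by
    refine Finset.prod_lt_prod (fun i _ => orderOf_pos i) (fun i _ => key i)
      ⟨1, Finset.mem_univ _, ?_⟩
    simp only [orderOf_one, QuotientGroup.mk_one]
    omega
  -- fibers of the quotient map have cardinality n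
  have hfiber : ∀ q : G ⧸ N,
      (Finset.univ.filter fun x : G => (QuotientGroup.mk x : G ⧸ N) = q).card = n := by
    intro q
    induction q using QuotientGroup.induction_on with
    | _ g =>
      rw [← Fintype.card_subtype]
      calc Fintype.card {x : G // (QuotientGroup.mk x : G ⧸ N) = QuotientGroup.mk g}
          = Fintype.card (↥(g • (N : Set G))) :=
            Fintype.card_congr (Equiv.setCongr (QuotientGroup.eq_class_eq_leftCoset N g))
        _ = n := Fintype.card_congr (Subgroup.leftCosetEquivSubgroup g)
  have hsplit : (∏ x : G, orderOf (QuotientGroup.mk x : G ⧸ N)) =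
      (∏ q : G ⧸ N, orderOf q) ^ n := by
    rw [← Finset.prod_pow]
    rw [← Finset.prod_fiberwise' Finset.univ
      (fun x : G => (QuotientGroup.mk x : G ⧸ N)) (fun q => orderOf q)]
    refine Finset.prod_congr rfl fun q _ => ?_
    rw [Finset.prod_const, hfiber]
  have hmain : (∏ x : G, orderOf x) <
      (∏ q : G ⧸ N, orderOf q) ^ n * n ^ Fintype.card G := by
    calc (∏ x : G, orderOf x)
        < ∏ x : G, (orderOf (QuotientGroup.mk x : G ⧸ N) * n) := hprodlt
      _ = (∏ x : G, orderOf (QuotientGroup.mk x : G ⧸ N)) * n ^ Fintype.card G := by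
          rw [Finset.prod_mul_distrib, Finset.prod_const, Finset.card_univ]
      _ = (∏ q : G ⧸ N, orderOf q) ^ n * n ^ Fintype.card G := by rw [hsplit]
  -- now pass to reals
  set a : ℝ := ((∏ x : G, orderOf x : ℕ) : ℝ) with ha
  set b : ℝ := ((∏ q : G ⧸ N, orderOf q : ℕ) : ℝ) with hb
  set cG : ℝ := (Fintype.card G : ℝ) with hcG
  set cQ : ℝ := (Fintype.card (G ⧸ N) : ℝ) with hcQ
  have hcGpos : (0 : ℝ) < cG := by
    rw [hcG]; exact_mod_cast Fintype.card_pos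
  have hcQpos : (0 : ℝ) < cQ := by
    rw [hcQ]; exact_mod_cast Fintype.card_pos
  have hnpos : (0 : ℝ) < (n : ℝ) := by exact_mod_cast Nat.lt_of_lt_of_le Nat.zero_lt_one hn1.le
  have hbpos : (0 : ℝ) < b := by
    rw [hb]
    exact_mod_cast Finset.prod_pos fun i _ => orderOf_pos i
  have hapos : (0 : ℝ) ≤ a := by positivity
  have hcGeq : cG = cQ * (n : ℝ) := by
    rw [hcG, hcQ]; exact_mod_cast hcard
  have hlt : a < b ^ (n : ℕ) * (n : ℝ) ^ (Fintype.card G) := by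
    rw [ha, hb]
    exact_mod_cast hmain
  -- take cG-th roots
  have hroot : a ^ ((1 : ℝ) / cG) < b ^ ((1 : ℝ) / cQ) * (n : ℝ) := by
    have h1' : a ^ ((1 : ℝ) / cG) <
        (b ^ (n : ℕ) * (n : ℝ) ^ (Fintype.card G)) ^ ((1 : ℝ) / cG) :=
      Real.rpow_lt_rpow hapos hlt (by positivity)
    have h2' : (b ^ (n : ℕ) * (n : ℝ) ^ (Fintype.card G)) ^ ((1 : ℝ) / cG)
        = b ^ ((1 : ℝ) / cQ) * (n : ℝ) := by
      rw [Real.mul_rpow (by positivity) (by positivity)]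
      rw [← Real.rpow_natCast b n, ← Real.rpow_natCast (n : ℝ) (Fintype.card G),
        ← Real.rpow_mul hbpos.le, ← Real.rpow_mul hnpos.le]
      congr 1
      · congr 1
        rw [hcGeq]
        field_simp
      · rw [← hcG]
        rw [mul_one_div, div_self hcGpos.ne', Real.rpow_one]
    rw [h2'] at h1'
    exact h1'
  -- conclude
  rw [lfun, lfun, ← ha, ← hb, ← hcG, ← hcQ]
  calc a ^ ((1 : ℝ) / cG) / cG
      < (b ^ ((1 : ℝ) / cQ) * (n : ℝ)) / cG := by
        first
        | exact div_lt_div_of_pos_right hroot hcGpos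
        | exact div_lt_div_of_lt hcGpos hroot
        | gcongr
    _ = b ^ ((1 : ℝ) / cQ) / cQ := by
        rw [hcGeq]
        rw [mul_comm cQ (n : ℝ), mul_comm (b ^ ((1 : ℝ) / cQ)) (n : ℝ),
          mul_div_mul_left _ _ hnpos.ne']
end

section
/- Let G be a finite group and N a nontrivial proper normal subgroup of G. Then ψ''(G) < ψ''(G/N), where ψ''(G) = ψ(G)/|G|^2 and ψ(G) is the sum of the orders of all elements of G. -/
section aux
set_option linter.unusedSectionVars false
variable {G : Type*} [Group G] [Fintype G] (N : Subgroup G) [N.Normal] [Fintype (G ⧸ N)]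

lemma order_le (g : G) :
    orderOf g ≤ Nat.card N * orderOf (QuotientGroup.mk g : G ⧸ N) := by
  set m := orderOf (QuotientGroup.mk g : G ⧸ N) with hm
  have hdvd : m ∣ orderOf g := orderOf_map_dvd (QuotientGroup.mk' N) g
  have hmem : g ^ m ∈ N := by
    rw [← QuotientGroup.eq_one_iff]
    exact_mod_cast pow_orderOf_eq_one (QuotientGroup.mk g : G ⧸ N)
  have h1 : orderOf (g ^ m) = orderOf g / m := by
    rw [orderOf_pow, Nat.gcd_eq_right hdvd]
  have h2 : orderOf (g ^ m) ≤ Nat.card N :=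
    Nat.le_of_dvd Nat.card_pos (N.orderOf_dvd_natCard hmem)
  calc orderOf g = m * (orderOf g / m) := (Nat.mul_div_cancel' hdvd).symm
    _ ≤ m * Nat.card N := Nat.mul_le_mul_left m (h1 ▸ h2)
    _ = Nat.card N * m := Nat.mul_comm _ _

lemma fiber_card (q : G ⧸ N) [DecidableEq (G ⧸ N)] :
    Fintype.card {g : G // QuotientGroup.mk g = q} = Nat.card N := by
  rw [← Nat.card_eq_fintype_card]
  have e1 : {g : G // QuotientGroup.mk g = q} ≃ (QuotientGroup.mk ⁻¹' ({q} : Set (G ⧸ N))) :=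
    Equiv.subtypeEquivRight (by simp)
  rw [Nat.card_congr e1, Nat.card_congr (QuotientGroup.preimageMkEquivSubgroupProdSet N {q})]
  simp

lemma sum_key (h1 : N ≠ ⊥) :
    ∑ g : G, orderOf g < Nat.card N ^ 2 * ∑ q : G ⧸ N, orderOf q := by
  classical
  have hN : 1 < Nat.card N := (Subgroup.one_lt_card_iff_ne_bot N).mpr h1
  have step1 : ∑ g : G, orderOf g < ∑ g : G, Nat.card N * orderOf (QuotientGroup.mk g : G ⧸ N) := by
    apply Finset.sum_lt_sum (fun g _ => order_le N g)
    refine ⟨1, Finset.mem_univ 1, ?_⟩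
    simp only [orderOf_one, QuotientGroup.mk_one]
    simpa using hN
  have step2 : ∑ g : G, orderOf (QuotientGroup.mk g : G ⧸ N) =
      Nat.card N * ∑ q : G ⧸ N, orderOf q := by
    rw [← Fintype.sum_fiberwise' (fun g : G => (QuotientGroup.mk g : G ⧸ N)) orderOf,
      Finset.mul_sum]
    refine Finset.sum_congr rfl fun q _ => ?_
    rw [Finset.sum_const, Finset.card_univ, fiber_card, smul_eq_mul]
  calc ∑ g : G, orderOf g < ∑ g : G, Nat.card N * orderOf (QuotientGroup.mk g : G ⧸ N) := step1
    _ = Nat.card N * ∑ g : G, orderOf (QuotientGroup.mk g : G ⧸ N) := by rw [Finset.mul_sum]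
    _ = Nat.card N ^ 2 * ∑ q : G ⧸ N, orderOf q := by rw [step2, sq, mul_assoc]

end aux

theorem stmt2 (G : Type*) [Group G] [Fintype G] (N : Subgroup G) [N.Normal]
    [Fintype (G ⧸ N)] (h1 : N ≠ ⊥) (h2 : N ≠ ⊤) :
    psi2 G < psi2 (G ⧸ N) := by
  have hcard : Nat.card G = Nat.card (G ⧸ N) * Nat.card N :=
    Subgroup.card_eq_card_quotient_mul_card_subgroup N
  have hkey := sum_key N h1
  have hn : (0 : ℝ) < (Nat.card N : ℝ) := by exact_mod_cast Nat.card_pos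
  have hq : (0 : ℝ) < (Nat.card (G ⧸ N) : ℝ) := by exact_mod_cast Nat.card_pos
  have hG : (Fintype.card G : ℝ) = (Nat.card (G ⧸ N) : ℝ) * (Nat.card N : ℝ) := by
    rw [← Nat.card_eq_fintype_card]; exact_mod_cast hcard
  have hQ : (Fintype.card (G ⧸ N) : ℝ) = (Nat.card (G ⧸ N) : ℝ) := by
    rw [← Nat.card_eq_fintype_card]
  rw [psi2, psi2, hG, hQ, div_lt_div_iff₀ (by positivity) (by positivity)]
  have hkeyR : ((∑ g : G, orderOf g : ℕ) : ℝ) <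
      (Nat.card N : ℝ) ^ 2 * ((∑ q : G ⧸ N, orderOf q : ℕ) : ℝ) := by
    push_cast at hkey ⊢
    exact_mod_cast hkey
  calc ((∑ g : G, orderOf g : ℕ) : ℝ) * (Nat.card (G ⧸ N) : ℝ) ^ 2
      < ((Nat.card N : ℝ) ^ 2 * ((∑ q : G ⧸ N, orderOf q : ℕ) : ℝ)) * (Nat.card (G ⧸ N) : ℝ) ^ 2 :=
        by apply mul_lt_mul_of_pos_right hkeyR (by positivity)
    _ = ((∑ q : G ⧸ N, orderOf q : ℕ) : ℝ) * ((Nat.card (G ⧸ N) : ℝ) * (Nat.card N : ℝ)) ^ 2 :=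
        by ring
end

section
/- If G is a finite cyclic group and K is a proper subgroup of G, then l(G) < l(K), where l(H) = ρ(H)^(1/|H|)/|H| and ρ(H) is the product of the orders of all elements of H. -/
open Finset Subgroup

lemma card_pow_eq_one_eq {G : Type*} [Group G] [Fintype G] [IsCyclic G] [DecidableEq G]
    {d : ℕ} (hd : 0 < d) (hdvd : d ∣ Fintype.card G) :
    #{a : G | a ^ d = 1} = d := by
  obtain ⟨s, hs⟩ := IsCyclic.exists_generator (α := G)
  refine le_antisymm (IsCyclic.card_pow_eq_one_le hd) ?_
  have hn0 : 0 < Fintype.card G := Fintype.card_pos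
  have hords : orderOf s = Fintype.card G := (orderOf_eq_card_of_forall_mem_zpowers hs).trans Nat.card_eq_fintype_card
  set t := s ^ (Fintype.card G / d) with ht
  have hot : orderOf t = d := by
    rw [ht, orderOf_pow, hords, Nat.gcd_eq_right (Nat.div_dvd_of_dvd hdvd),
      Nat.div_div_self hdvd hn0.ne']
  have htd : t ^ d = 1 := by rw [← hot]; exact pow_orderOf_eq_one t
  have hmem : ∀ x ∈ Subgroup.zpowers t, x ^ d = 1 := by
    intro x hx
    obtain ⟨j, rfl⟩ := Subgroup.mem_zpowers_iff.1 hx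
    rw [← zpow_natCast, ← zpow_mul, mul_comm, zpow_mul, zpow_natCast, htd, one_zpow]
  calc d = orderOf t := hot.symm
    _ = Nat.card (Subgroup.zpowers t) := (Nat.card_zpowers t).symm
    _ = Fintype.card (Subgroup.zpowers t) := Nat.card_eq_fintype_card
    _ = #{a : G | a ∈ Subgroup.zpowers t} := Fintype.card_subtype _
    _ ≤ #{a : G | a ^ d = 1} := by
        apply Finset.card_le_card
        intro x hx
        simp only [Finset.mem_filter, Finset.mem_univ, true_and] at hx ⊢
        exact hmem x hx

theorem stmt3 (G : Type*) [Group G] [Fintype G] [IsCyclic G] (K : Subgroup G)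
    [Fintype K] (hK : K ≠ ⊤) :
    lfun G < lfun K := by
  classical
  letI : CommGroup G := IsCyclic.commGroup
  obtain ⟨s, hs⟩ := IsCyclic.exists_generator (α := G)
  have hords : orderOf s = Fintype.card G :=
    (orderOf_eq_card_of_forall_mem_zpowers hs).trans Nat.card_eq_fintype_card
  set n := Fintype.card G with hn
  set k := Fintype.card K with hk
  have hn0 : 0 < n := Fintype.card_pos
  have hk0 : 0 < k := Fintype.card_pos
  have hdvd : k ∣ n := by
    have := Subgroup.card_subgroup_dvd_card K
    simpa using this
  have hkn : k < n := by
    rcases lt_or_eq_of_le (Nat.le_of_dvd hn0 hdvd) with h | h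
    · exact h
    · exact absurd (Subgroup.eq_top_of_card_eq K (by simpa [Nat.card_eq_fintype_card] using h)) hK
  set m := n / k with hm
  have hmk : m * k = n := Nat.div_mul_cancel hdvd
  have hm0 : 0 < m := Nat.div_pos (Nat.le_of_dvd hn0 hdvd) hk0
  have hm1 : 1 < m := by nlinarith [hmk, hkn, hk0]
  have hmdvd : m ∣ n := ⟨k, hmk.symm⟩
  -- K is exactly the set of solutions to x ^ k = 1
  have hKset : ∀ x : G, x ∈ K ↔ x ^ k = 1 := by
    have hKsub : (Finset.univ.filter fun a : G => a ∈ K) ⊆ (Finset.univ.filter fun a : G => a ^ k = 1) := by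
      intro x hx
      simp only [Finset.mem_filter, Finset.mem_univ, true_and] at hx ⊢
      have : ((⟨x, hx⟩ : K) : G) ^ k = 1 := by
        rw [← SubmonoidClass.coe_pow, hk, pow_card_eq_one, OneMemClass.coe_one]
      simpa using this
    have hKF : #(Finset.univ.filter fun a : G => a ∈ K) = k := by
      rw [hk]
      exact (Fintype.card_of_subtype _ (fun x => by simp)).symm
    have hcards : #(Finset.univ.filter fun a : G => a ^ k = 1) ≤ #(Finset.univ.filter fun a : G => a ∈ K) := by
      rw [hKF]
      exact le_of_eq (card_pow_eq_one_eq hk0 hdvd)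
    have := Finset.eq_of_subset_of_card_le hKsub hcards
    intro x
    constructor
    · intro hx
      have : x ∈ (Finset.univ.filter fun a : G => a ^ k = 1) := hKsub (by simpa using hx)
      simpa using this
    · intro hx
      have : x ∈ (Finset.univ.filter fun a : G => a ∈ K) := this ▸ (by simpa using hx)
      simpa using this
  -- the image of g ↦ g ^ m is exactly K
  set B : Finset G := Finset.univ.image (fun g : G => g ^ m) with hB
  have hBK : ∀ x : G, x ∈ B ↔ x ∈ K := by
    intro x
    rw [hKset x]
    constructor
    · intro hx
      obtain ⟨g, -, rfl⟩ := Finset.mem_image.1 hx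
      rw [← pow_mul, hmk, hn, pow_card_eq_one]
    · intro hx
      obtain ⟨j, rfl⟩ := Subgroup.mem_zpowers_iff.1 (hs x)
      have h1 : s ^ (j * (k : ℤ)) = 1 := by
        rw [zpow_mul, zpow_natCast, hx]
      have h2 : ((n : ℤ)) ∣ j * (k : ℤ) := by
        have := orderOf_dvd_iff_zpow_eq_one.2 h1
        rwa [hords] at this
      have h3 : ((m : ℤ)) ∣ j := by
        have hk' : ((k : ℤ)) ∣ j * (k : ℤ) := Dvd.intro_left j rfl
        rcases h2 with ⟨c, hc⟩
        have : j * (k : ℤ) = (m : ℤ) * c * (k : ℤ) := by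
          rw [hc, ← hmk]; push_cast; ring
        have hj : j = (m : ℤ) * c := by
          have hkne : ((k : ℤ)) ≠ 0 := by exact_mod_cast hk0.ne'
          exact mul_right_cancel₀ hkne this
        exact ⟨c, hj⟩
      obtain ⟨c, rfl⟩ := h3
      refine Finset.mem_image.2 ⟨s ^ c, Finset.mem_univ _, ?_⟩
      rw [← zpow_natCast (s ^ c) m, ← zpow_mul, mul_comm]
  -- fiber sizes of g ↦ g ^ m are all m
  have hfiber : ∀ b ∈ B, #{a : G | a ^ m = b} = m := by
    intro b hb
    obtain ⟨a₀, -, rfl⟩ := Finset.mem_image.1 hb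
    have : #{a : G | a ^ m = a₀ ^ m} = #{a : G | a ^ m = 1} := by
      apply Finset.card_bij' (fun x _ => a₀⁻¹ * x) (fun y _ => a₀ * y)
      · intro x hx
        simp only [Finset.mem_filter, Finset.mem_univ, true_and] at hx ⊢
        rw [mul_pow, inv_pow, hx, inv_mul_cancel]
      · intro y hy
        simp only [Finset.mem_filter, Finset.mem_univ, true_and] at hy ⊢
        rw [mul_pow, hy, mul_one]
      · intro x _; simp
      · intro y _; simp
    rw [this, card_pow_eq_one_eq hm0 hmdvd]
  -- key product identity and inequality over ℕ
  set ρK := ∏ h : K, orderOf h with hρK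
  have hKprod : ∏ b ∈ B, orderOf b = ρK := by
    rw [hρK]
    rw [Finset.prod_subtype B hBK (fun b => orderOf b)]
    exact Fintype.prod_congr _ _ fun h => Subgroup.orderOf_coe h
  have hcomp : ∏ g : G, orderOf (g ^ m) = ρK ^ m := by
    rw [Finset.prod_comp (fun b => orderOf b) (fun g : G => g ^ m)]
    rw [← hB]
    calc ∏ b ∈ B, orderOf b ^ #(Finset.univ.filter fun a : G => a ^ m = b)
        = ∏ b ∈ B, orderOf b ^ m := Finset.prod_congr rfl (fun b hb => by rw [hfiber b hb])
      _ = (∏ b ∈ B, orderOf b) ^ m := by rw [Finset.prod_pow]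
      _ = ρK ^ m := by rw [hKprod]
  have key : (∏ g : G, orderOf g) < m ^ n * ρK ^ m := by
    have hle : ∀ g : G, orderOf g ≤ m * orderOf (g ^ m) := by
      intro g
      have hop : orderOf (g ^ m) = orderOf g / Nat.gcd (orderOf g) m := orderOf_pow g
      calc orderOf g = orderOf g / Nat.gcd (orderOf g) m * Nat.gcd (orderOf g) m :=
            (Nat.div_mul_cancel (Nat.gcd_dvd_left _ _)).symm
        _ ≤ orderOf (g ^ m) * m := by
            rw [hop]
            exact Nat.mul_le_mul_left _ (Nat.gcd_le_right _ hm0)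
        _ = m * orderOf (g ^ m) := mul_comm _ _
    calc (∏ g : G, orderOf g) < ∏ g : G, m * orderOf (g ^ m) := by
          apply Finset.prod_lt_prod
          · exact fun g _ => orderOf_pos g
          · exact fun g _ => hle g
          · refine ⟨1, Finset.mem_univ 1, ?_⟩
            simpa using hm1
      _ = m ^ n * ρK ^ m := by
          rw [Finset.prod_mul_distrib, Finset.prod_const, Finset.card_univ, ← hn, hcomp]
  -- pass to the reals
  have hρK1 : (1 : ℕ) ≤ ρK := Finset.one_le_prod' fun h _ => orderOf_pos h
  have hcast : ((∏ g : G, orderOf g : ℕ) : ℝ) < (m : ℝ) ^ n * (ρK : ℝ) ^ m := by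
    exact_mod_cast key
  have hn0' : (0 : ℝ) < n := by exact_mod_cast hn0
  have hk0' : (0 : ℝ) < k := by exact_mod_cast hk0
  have hm0' : (0 : ℝ) < m := by exact_mod_cast hm0
  have hρK0' : (0 : ℝ) < (ρK : ℝ) := by exact_mod_cast hρK1
  have step1 : ((∏ g : G, orderOf g : ℕ) : ℝ) ^ ((1 : ℝ) / (n : ℝ)) <
      ((m : ℝ) ^ n * (ρK : ℝ) ^ m) ^ ((1 : ℝ) / (n : ℝ)) :=
    Real.rpow_lt_rpow (by positivity) hcast (by positivity)
  have step2 : ((m : ℝ) ^ n * (ρK : ℝ) ^ m) ^ ((1 : ℝ) / (n : ℝ)) =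
      (m : ℝ) * (ρK : ℝ) ^ ((1 : ℝ) / (k : ℝ)) := by
    rw [Real.mul_rpow (by positivity) (by positivity)]
    congr 1
    · rw [← Real.rpow_natCast (m : ℝ) n, ← Real.rpow_mul hm0'.le, mul_one_div,
        div_self hn0'.ne', Real.rpow_one]
    · rw [← Real.rpow_natCast (ρK : ℝ) m, ← Real.rpow_mul hρK0'.le, mul_one_div]
      congr 1
      rw [← hmk]
      push_cast
      rw [mul_comm (m:ℝ) (k:ℝ), div_eq_div_iff (by positivity) hk0'.ne']
      ring
  unfold lfun
  rw [← hn, ← hk, ← hρK]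
  calc ((∏ g : G, orderOf g : ℕ) : ℝ) ^ ((1 : ℝ) / (n : ℝ)) / (n : ℝ)
      < ((m : ℝ) * (ρK : ℝ) ^ ((1 : ℝ) / (k : ℝ))) / (n : ℝ) := by
        rw [div_lt_div_iff_of_pos_right hn0', ← step2]; exact step1
    _ = (ρK : ℝ) ^ ((1 : ℝ) / (k : ℝ)) / (k : ℝ) := by
        rw [← hmk]; push_cast
        field_simp
end

section
/- If G and H are finite groups with coprime orders, then l(G × H) = l(G) · l(H), where l(G) = ρ(G)^(1/|G|)/|G| and ρ(G) is the product of the orders of all elements of G. -/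
theorem stmt4 (G H : Type*) [Group G] [Fintype G] [Group H] [Fintype H]
    (h : Nat.Coprime (Fintype.card G) (Fintype.card H)) :
    lfun (G × H) = lfun G * lfun H := by
  have hGc : (0:ℝ) < (Fintype.card G : ℝ) := by exact_mod_cast Fintype.card_pos
  have hHc : (0:ℝ) < (Fintype.card H : ℝ) := by exact_mod_cast Fintype.card_pos
  have ha : (0:ℝ) < ((∏ g : G, orderOf g : ℕ) : ℝ) := by
    exact_mod_cast Finset.prod_pos fun g _ => orderOf_pos g
  have hb : (0:ℝ) < ((∏ g : H, orderOf g : ℕ) : ℝ) := by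
    exact_mod_cast Finset.prod_pos fun g _ => orderOf_pos g
  have key : (∏ x : G × H, orderOf x) =
      (∏ g : G, orderOf g) ^ (Fintype.card H) * (∏ y : H, orderOf y) ^ (Fintype.card G) := by
    rw [Fintype.prod_prod_type]
    have horder : ∀ (g : G) (y : H), orderOf (g, y) = orderOf g * orderOf y := by
      intro g y
      rw [Prod.orderOf]
      exact Nat.Coprime.lcm_eq_mul
        ((h.coprime_dvd_left (orderOf_dvd_card)).coprime_dvd_right (orderOf_dvd_card))
    simp_rw [horder, Finset.prod_mul_distrib, Finset.prod_const, Finset.card_univ,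
      Finset.prod_pow]
  simp only [lfun, key, Fintype.card_prod, Nat.cast_mul, Nat.cast_pow]
  rw [Real.mul_rpow (by positivity) (by positivity),
    ← Real.rpow_natCast ((∏ g : G, orderOf g : ℕ) : ℝ) (Fintype.card H),
    ← Real.rpow_natCast ((∏ g : H, orderOf g : ℕ) : ℝ) (Fintype.card G),
    ← Real.rpow_mul ha.le, ← Real.rpow_mul hb.le]
  have h1 : (Fintype.card H : ℝ) * (1 / ((Fintype.card G : ℝ) * (Fintype.card H : ℝ)))
      = 1 / (Fintype.card G : ℝ) := by field_simp
  have h2 : (Fintype.card G : ℝ) * (1 / ((Fintype.card G : ℝ) * (Fintype.card H : ℝ)))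
      = 1 / (Fintype.card H : ℝ) := by field_simp
  rw [h1, h2]
  field_simp
end

section
/- If G and H are finite groups with coprime orders, then ρ(G × H) = ρ(G)^{|H|} · ρ(H)^{|G|}, where ρ(G) is the product of the orders of all elements of G. -/
theorem stmt5 (G H : Type*) [Group G] [Fintype G] [Group H] [Fintype H]
    (h : Nat.Coprime (Fintype.card G) (Fintype.card H)) :
    (∏ x : G × H, orderOf x) =
      (∏ g : G, orderOf g) ^ (Fintype.card H) * (∏ h : H, orderOf h) ^ (Fintype.card G) := by
  have key : ∀ x : G × H, orderOf x = orderOf x.1 * orderOf x.2 := by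
    intro x
    rw [Prod.orderOf, Nat.Coprime.lcm_eq_mul]
    exact Nat.Coprime.coprime_dvd_left (orderOf_dvd_card)
      (Nat.Coprime.coprime_dvd_right orderOf_dvd_card h)
  calc (∏ x : G × H, orderOf x) = ∏ x : G × H, orderOf x.1 * orderOf x.2 := by
        simp [key]
    _ = (∏ g : G, orderOf g) ^ (Fintype.card H) * (∏ h : H, orderOf h) ^ (Fintype.card G) := by
        rw [Fintype.prod_prod_type]
        simp [Finset.prod_mul_distrib, Finset.prod_const, mul_pow, Finset.prod_pow, mul_comm]
end

section
/- Let p be a prime and P a nontrivial cyclic p-group of order p^n. Then ψ''(P) = (p^{2n+1} + 1)/(p^{2n+1} + p^{2n}), where ψ''(P) = (Σ_{g∈P} o(g))/|P|^2. -/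
lemma sum_orderOf_cyclic (G : Type*) [Group G] [Fintype G] [IsCyclic G] :
    (∑ g : G, orderOf g) = ∑ d ∈ (Fintype.card G).divisors, d.totient * d := by
  classical
  rw [← Finset.sum_fiberwise_of_maps_to (g := fun g : G => orderOf g)
      (f := fun g : G => orderOf g) (t := (Fintype.card G).divisors)
      (fun g _ => Nat.mem_divisors.mpr ⟨orderOf_dvd_card, Fintype.card_ne_zero⟩)]
  refine Finset.sum_congr rfl fun d hd => ?_
  rw [Finset.sum_congr rfl (fun g hg => (Finset.mem_filter.mp hg).2),
    Finset.sum_const, smul_eq_mul]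
  congr 1
  exact IsCyclic.card_orderOf_eq_totient (Nat.mem_divisors.mp hd).1

lemma sum_totient_pow (p : ℕ) (hp : p.Prime) (n : ℕ) :
    ((∑ i ∈ Finset.range (n + 1), (p ^ i).totient * p ^ i : ℕ) : ℝ) * (p + 1)
      = (p : ℝ) ^ (2 * n + 1) + 1 := by
  induction n with
  | zero => simp
  | succ n ih =>
    rw [Finset.sum_range_succ]
    have ht : ((p ^ (n + 1)).totient : ℝ) = (p : ℝ) ^ n * ((p : ℝ) - 1) := by
      rw [Nat.totient_prime_pow hp (Nat.succ_pos n)]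
      push_cast [Nat.cast_sub hp.one_le]
      ring
    push_cast [ht] at *
    linear_combination ih

theorem stmt7 (p n : ℕ) (hp : p.Prime) (hn : 1 ≤ n)
    (P : Type*) [Group P] [Fintype P] [IsCyclic P] (hcard : Fintype.card P = p ^ n) :
    psi2 P = ((p : ℝ) ^ (2 * n + 1) + 1) / ((p : ℝ) ^ (2 * n + 1) + (p : ℝ) ^ (2 * n)) := by
  have hS : ((∑ g : P, orderOf g : ℕ) : ℝ) * (p + 1) = (p : ℝ) ^ (2 * n + 1) + 1 := by
    rw [sum_orderOf_cyclic, hcard, Nat.sum_divisors_prime_pow hp]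
    exact sum_totient_pow p hp n
  have hp0 : (0 : ℝ) < p := by exact_mod_cast hp.pos
  unfold psi2
  rw [hcard]
  have h1 : ((p : ℝ) ^ n) ^ 2 ≠ 0 := by positivity
  have h2 : (p : ℝ) ^ (2 * n + 1) + (p : ℝ) ^ (2 * n) ≠ 0 := by positivity
  push_cast at hS ⊢
  field_simp
  linear_combination ((p : ℝ) ^ (2 * n)) * hS
end

section
/- Let p be a prime and P a nontrivial cyclic p-group of order p^n. Then l(P) = p^{-(p^n - 1)/(p^n(p-1))}, where l(P) = ρ(P)^(1/|P|)/|P| and ρ(P) is the product of the orders of all elements of P. -/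
lemma sum_key_s8 (p n : ℕ) (hp : p.Prime) :
    (∑ k ∈ Finset.range (n + 1), k * (p ^ k).totient) * (p - 1) + p ^ n
      = n * p ^ n * (p - 1) + 1 := by
  induction n with
  | zero => simp
  | succ n ih =>
    rw [Finset.sum_range_succ, Nat.totient_prime_pow hp (Nat.succ_pos n)]
    have h1 : 1 ≤ p := hp.one_lt.le
    simp only [Nat.succ_sub_one]
    zify [h1] at ih ⊢
    linear_combination ih

lemma prod_orderOf (p n : ℕ) (hp : p.Prime)
    (P : Type*) [Group P] [Fintype P] [IsCyclic P] (hcard : Fintype.card P = p ^ n) :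
    (∏ g : P, orderOf g) = p ^ (∑ k ∈ Finset.range (n + 1), k * (p ^ k).totient) := by
  classical
  have hmaps : ∀ g ∈ (Finset.univ : Finset P), orderOf g ∈ (p ^ n).divisors := by
    intro g _
    rw [Nat.mem_divisors]
    exact ⟨hcard ▸ orderOf_dvd_card, (pow_pos hp.pos n).ne'⟩
  rw [← Finset.prod_fiberwise_of_maps_to hmaps (fun g => orderOf g)]
  have : ∀ d ∈ (p ^ n).divisors,
      (∏ g ∈ Finset.univ.filter (fun g : P => orderOf g = d), orderOf g) = d ^ d.totient := by
    intro d hd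
    rw [Finset.prod_congr rfl (fun g hg => (Finset.mem_filter.mp hg).2),
      Finset.prod_const]
    congr 1
    have := IsCyclic.card_orderOf_eq_totient (α := P) (d := d)
      (hcard ▸ (Nat.mem_divisors.mp hd).1)
    simpa using this
  rw [Finset.prod_congr rfl this, Nat.prod_divisors_prime_pow hp]
  rw [← Finset.prod_pow_eq_pow_sum]
  exact Finset.prod_congr rfl fun k _ => by rw [← pow_mul, mul_comm]

theorem stmt8 (p n : ℕ) (hp : p.Prime) (hn : 1 ≤ n)
    (P : Type*) [Group P] [Fintype P] [IsCyclic P] (hcard : Fintype.card P = p ^ n) :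
    lfun P = (p : ℝ) ^ (-(((p : ℝ) ^ n - 1) / ((p : ℝ) ^ n * ((p : ℝ) - 1)))) := by
  have hp1 : (1:ℝ) < (p:ℝ) := by exact_mod_cast hp.one_lt
  have hp0 : (0:ℝ) < (p:ℝ) := by positivity
  set S := ∑ k ∈ Finset.range (n + 1), k * (p ^ k).totient with hS
  have hprod := prod_orderOf p n hp P hcard
  rw [lfun, hprod, hcard]
  have hpn : (0:ℝ) < (p:ℝ) ^ n := by positivity
  have e1 : ((p ^ S : ℕ) : ℝ) = (p:ℝ) ^ (S:ℝ) := by push_cast; rw [Real.rpow_natCast]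
  have e2 : ((p ^ n : ℕ) : ℝ) = (p:ℝ) ^ (n:ℝ) := by push_cast; rw [Real.rpow_natCast]
  rw [e1, e2, ← Real.rpow_mul hp0.le, ← Real.rpow_sub hp0]
  congr 1
  have key : ((S:ℝ)) * ((p:ℝ) - 1) + (p:ℝ) ^ n = (n:ℝ) * (p:ℝ) ^ n * ((p:ℝ) - 1) + 1 := by
    have := sum_key_s8 p n hp
    have h1 : 1 ≤ p := hp.one_lt.le
    zify [h1] at this
    exact_mod_cast this
  have hpn' : ((p:ℝ) ^ n) ≠ 0 := hpn.ne'
  have hp1' : ((p:ℝ) - 1) ≠ 0 := by linarith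
  have hrpn : (p:ℝ) ^ ((n:ℝ)) = (p:ℝ) ^ n := Real.rpow_natCast _ n
  rw [hrpn]
  field_simp
  linear_combination key
end

section
/- Let p be a prime and P a nontrivial cyclic p-group. Then p^{-1/(p-1)} ≤ l(P) ≤ p^{-1/p}, where l(P) = ρ(P)^(1/|P|)/|P| and ρ(P) is the product of the orders of all elements of P. -/
open Finset


lemma prod_ord (N : ℕ) (P : Type*) [Group P] [Fintype P] [IsCyclic P]
    (hcard : Fintype.card P = N) :
    (∏ g : P, orderOf g) = ∏ d ∈ N.divisors, d ^ Nat.totient d := by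
  classical
  have h : ∀ g : P, g ∈ (univ : Finset P) → orderOf g ∈ N.divisors := by
    intro g _
    rw [Nat.mem_divisors]
    refine ⟨hcard ▸ orderOf_dvd_card, ?_⟩
    rintro rfl
    exact (Fintype.card_ne_zero (α := P)) hcard
  rw [show (∏ g : P, orderOf g) = ∏ g : P, id (orderOf g) from rfl,
    ← Finset.prod_fiberwise_of_maps_to' h (id : ℕ → ℕ)]
  refine Finset.prod_congr rfl fun d hd => ?_
  rw [Finset.prod_const]
  congr 1
  have := IsCyclic.card_orderOf_eq_totient (α := P) (d := d) (hcard ▸ (Nat.mem_divisors.mp hd).1)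
  simpa using this

lemma Esum (p : ℕ) (hp : p.Prime) (n : ℕ) :
    ((∑ k ∈ range (n+1), k * (p^k).totient : ℕ) : ℝ) * ((p:ℝ) - 1)
      = n * (p:ℝ)^(n+1) - (n+1) * (p:ℝ)^n + 1 := by
  induction n with
  | zero => simp
  | succ m ih =>
    rw [Finset.sum_range_succ]
    push_cast [Nat.totient_prime_pow hp (Nat.succ_pos m), hp.one_lt.le]
    push_cast at ih
    linear_combination ih

theorem stmt9 (p n : ℕ) (hp : p.Prime) (hn : 1 ≤ n)
    (P : Type*) [Group P] [Fintype P] [IsCyclic P] (hcard : Fintype.card P = p ^ n) :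
    (p : ℝ) ^ (-(1 / ((p : ℝ) - 1))) ≤ lfun P ∧ lfun P ≤ (p : ℝ) ^ (-(1 / (p : ℝ))) := by
  classical
  set E : ℕ := ∑ k ∈ range (n+1), k * (p^k).totient with hE
  have hρ : (∏ g : P, orderOf g) = p ^ E := by
    rw [prod_ord (p^n) P hcard, Nat.prod_divisors_prime_pow hp, hE,
      ← Finset.prod_pow_eq_pow_sum]
    exact Finset.prod_congr rfl fun i _ => (pow_mul p i _).symm
  have hp2 : (2:ℝ) ≤ (p:ℝ) := by exact_mod_cast hp.two_le
  have hp0 : (0:ℝ) < (p:ℝ) := by linarith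
  have hp1 : (1:ℝ) < (p:ℝ) := by linarith
  set c : ℝ := (p:ℝ)^n with hc
  have hc1 : (p:ℝ) ≤ c := by
    calc (p:ℝ) = (p:ℝ)^1 := (pow_one _).symm
    _ ≤ (p:ℝ)^n := pow_le_pow_right₀ (by linarith) hn
  have hc0 : (0:ℝ) < c := by positivity
  -- express lfun as a rpow of p
  have hlf : lfun P = (p:ℝ) ^ ((E:ℝ)/c - n) := by
    rw [lfun, hρ, hcard]
    push_cast
    rw [← Real.rpow_natCast (p:ℝ) E, ← Real.rpow_natCast (p:ℝ) n,
      ← Real.rpow_mul hp0.le, ← Real.rpow_sub hp0]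
    congr 1
    rw [hc, ← Real.rpow_natCast (p:ℝ) n]
    ring
  have hEsum := Esum p hp n
  have hpc : (p:ℝ)^(n+1) = (p:ℝ) * c := by rw [hc]; ring
  -- key identity for the exponent
  have hkey : ((E:ℝ)/c - n) * (((p:ℝ) - 1) * c) = 1 - c := by
    rw [hpc, ← hc] at hEsum
    field_simp
    linear_combination hEsum
  have hd1 : (0:ℝ) < (p:ℝ) - 1 := by linarith
  have hdc : (0:ℝ) < ((p:ℝ) - 1) * c := by positivity
  have hexp : (E:ℝ)/c - n = (1 - c)/(((p:ℝ) - 1) * c) := by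
    rw [eq_div_iff hdc.ne']; exact hkey
  constructor
  · rw [hlf, Real.rpow_le_rpow_left_iff hp1, hexp,
      show -(1 / ((p:ℝ) - 1)) = (-1)/((p:ℝ)-1) by ring, div_le_div_iff₀ hd1 hdc]
    nlinarith
  · rw [hlf, Real.rpow_le_rpow_left_iff hp1, hexp,
      show -(1 / (p:ℝ)) = (-1)/(p:ℝ) by ring, div_le_div_iff₀ hdc hp0]
    nlinarith
end

section
/- Let G be a finite cyclic group of odd order, let p ≥ 3 be the smallest prime dividing |G|, and suppose the number of distinct prime divisors of |G| is at most (p+1)/2. Then l(G) > 2^{-1/2} · p^{-(p+1)/(2p)}, where l(G) = ρ(G)^(1/|G|)/|G| and ρ(G) is the product of the orders of all elements of G. -/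
open Finset

/-- Antitonicity of `log x / (x-1)` on `[3, ∞)`. -/
lemma aux_log_antitone {x y : ℝ} (hx : 3 ≤ x) (hxy : x ≤ y) :
    Real.log y / (y - 1) ≤ Real.log x / (x - 1) := by
  have hx0 : (0:ℝ) < x := by linarith
  have hy0 : (0:ℝ) < y := by linarith
  have h1x : (1:ℝ) ≤ Real.log x := by
    have he : Real.exp 1 ≤ x :=
      le_trans (le_of_lt (lt_trans Real.exp_one_lt_d9 (by norm_num))) hx
    calc (1:ℝ) = Real.log (Real.exp 1) := (Real.log_exp 1).symm
    _ ≤ Real.log x := Real.log_le_log (Real.exp_pos 1) he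
  have hlog : x * (Real.log y - Real.log x) ≤ y - x := by
    have h1 := Real.log_le_sub_one_of_pos (show 0 < y / x by positivity)
    rw [Real.log_div (by linarith) (by linarith)] at h1
    have h2 : x * (Real.log y - Real.log x) ≤ x * (y / x - 1) :=
      mul_le_mul_of_nonneg_left h1 (le_of_lt hx0)
    have h3 : x * (y / x - 1) = y - x := by field_simp
    linarith
  rw [div_le_div_iff₀ (by linarith) (by linarith)]
  nlinarith [mul_nonneg (sub_nonneg.2 hxy) (sub_nonneg.2 h1x)]

/-- `∑_{d | n, d | m} φ(d) = m` when `m ∣ n`. -/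
lemma aux_count {n m : ℕ} (hn : n ≠ 0) (hm : m ∣ n) :
    ∑ d ∈ n.divisors, (if d ∣ m then d.totient else 0) = m := by
  rw [← Finset.sum_filter, Nat.divisors_filter_dvd_of_dvd hn hm, Nat.sum_totient]

lemma aux_Vj {n q j : ℕ} (hn : n ≠ 0) (h : q ^ j ∣ n) :
    ∑ d ∈ n.divisors, (if q ^ j ∣ d then (n / d).totient else 0) = n / q ^ j := by
  have key := Nat.sum_div_divisors n (fun d => if q ^ j ∣ d then (n / d).totient else 0)
  rw [← key, Finset.sum_congr rfl (fun d hd => ?_), aux_count hn (Nat.div_dvd_of_dvd h)]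
  have hd' := (Nat.mem_divisors.mp hd).1
  have h1 : n / (n / d) = d := Nat.div_div_self hd' hn
  have h2 : q ^ j ∣ n / d ↔ d ∣ n / q ^ j := by
    rw [Nat.dvd_div_iff_mul_dvd hd', Nat.dvd_div_iff_mul_dvd h, mul_comm]
  rw [h1]
  simp only [h2]

lemma aux_S_eq {n q : ℕ} (hn : n ≠ 0) (hq : q.Prime) :
    ∑ d ∈ n.divisors, (n / d).totient * d.factorization q
      = ∑ j ∈ Finset.Icc 1 (n.factorization q), n / q ^ j := by
  have step1 : ∀ d ∈ n.divisors, (n / d).totient * d.factorization q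
      = ∑ j ∈ Finset.Icc 1 (n.factorization q), (if q ^ j ∣ d then (n / d).totient else 0) := by
    intro d hd
    obtain ⟨hdn, -⟩ := Nat.mem_divisors.mp hd
    have hd0 : d ≠ 0 := fun h => hn (Nat.eq_zero_of_zero_dvd (h ▸ hdn))
    have hvle : d.factorization q ≤ n.factorization q :=
      (Nat.factorization_le_iff_dvd hd0 hn).mpr hdn q
    rw [← Finset.sum_filter]
    have hset : {j ∈ Finset.Icc 1 (n.factorization q) | q ^ j ∣ d}
        = Finset.Icc 1 (d.factorization q) := by
      ext j
      simp only [Finset.mem_filter, Finset.mem_Icc,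
        hq.pow_dvd_iff_le_factorization hd0]
      omega
    rw [hset, Finset.sum_const, Nat.card_Icc, smul_eq_mul, Nat.add_sub_cancel, mul_comm]
  rw [Finset.sum_congr rfl step1, Finset.sum_comm]
  refine Finset.sum_congr rfl fun j hj => ?_
  have hjle : j ≤ n.factorization q := (Finset.mem_Icc.mp hj).2
  exact aux_Vj hn ((hq.pow_dvd_iff_le_factorization hn).mpr hjle)

lemma aux_telescope {q : ℕ} (hq : 2 ≤ q) (n : ℕ) :
    ∀ a, q ^ a ∣ n →
      (q - 1) * (∑ j ∈ Finset.Icc 1 a, n / q ^ j) + n / q ^ a = n := by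
  intro a
  induction a with
  | zero => simp
  | succ a ih =>
    intro hdvd
    have ha : q ^ a ∣ n := dvd_trans (pow_dvd_pow q (Nat.le_succ a)) hdvd
    have key : q * (n / q ^ (a + 1)) = n / q ^ a := by
      obtain ⟨m, rfl⟩ := hdvd
      rw [Nat.mul_div_cancel_left _ (by positivity), pow_succ, mul_assoc,
        Nat.mul_div_cancel_left _ (by positivity)]
    rw [Finset.sum_Icc_succ_top (by omega)]
    have := ih ha
    set S := ∑ j ∈ Finset.Icc 1 a, n / q ^ j
    set t := n / q ^ (a + 1)
    obtain ⟨r, rfl⟩ : ∃ r, q = r + 2 := ⟨q - 2, by omega⟩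
    have expand : (r + 2 - 1) * (S + t) + t = (r + 2 - 1) * S + (r + 2) * t := by
      simp only [show r + 2 - 1 = r + 1 from rfl]; ring
    rw [expand, key] at *
    omega

lemma aux_S_lt {n q : ℕ} (hn : n ≠ 0) (hq : q ∈ n.primeFactors) :
    (q - 1) * (∑ d ∈ n.divisors, (n / d).totient * d.factorization q) < n := by
  obtain ⟨hqp, hqd, -⟩ := Nat.mem_primeFactors.mp hq
  rw [aux_S_eq hn hqp]
  have h2 := aux_telescope hqp.two_le n (n.factorization q) (Nat.ordProj_dvd n q)
  have hpos : 0 < n / q ^ n.factorization q :=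
    Nat.div_pos (Nat.le_of_dvd (Nat.pos_of_ne_zero hn) (Nat.ordProj_dvd n q)) (pow_pos hqp.pos _)
  omega

/-- log of a divisor of n as a sum over the prime factors of n. -/
lemma aux_log_div {n d : ℕ} (hn : n ≠ 0) (hd : d ∣ n) :
    Real.log d = ∑ q ∈ n.primeFactors, (d.factorization q : ℝ) * Real.log q := by
  have hd0 : d ≠ 0 := fun h => hn (Nat.eq_zero_of_zero_dvd (h ▸ hd))
  have hfac0 : d = ∏ q ∈ d.primeFactors, q ^ d.factorization q := by
    conv_lhs => rw [← Nat.factorization_prod_pow_eq_self hd0]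
    rw [← Nat.support_factorization]
    rfl
  have hfac : d = ∏ q ∈ n.primeFactors, q ^ d.factorization q := by
    conv_lhs => rw [hfac0]
    refine Finset.prod_subset (Nat.primeFactors_mono hd hn) fun q _ hq => ?_
    have h0 : d.factorization q = 0 := by
      rw [← Finsupp.notMem_support_iff, Nat.support_factorization]; exact hq
    rw [h0, pow_zero]
  conv_lhs => rw [hfac]
  push_cast
  rw [Real.log_prod fun q hq => by
    have := (Nat.mem_primeFactors.mp hq).1.pos
    positivity]
  refine Finset.sum_congr rfl fun q hq => ?_
  rw [Real.log_pow]

lemma aux_prod_orderOf (G : Type*) [Group G] [Fintype G] [IsCyclic G] :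
    ∏ g : G, orderOf g = ∏ d ∈ (Fintype.card G).divisors, d ^ d.totient := by
  classical
  rw [← Finset.prod_fiberwise_of_maps_to (g := fun g : G => orderOf g)
      (t := (Fintype.card G).divisors) (fun g _ => Nat.mem_divisors.mpr
        ⟨orderOf_dvd_card, Fintype.card_ne_zero⟩) (fun g => orderOf g)]
  refine Finset.prod_congr rfl fun d hd => ?_
  have hcard := IsCyclic.card_orderOf_eq_totient (α := G) (Nat.mem_divisors.mp hd).1
  calc ∏ g ∈ Finset.univ.filter (fun g : G => orderOf g = d), orderOf g
      = ∏ _g ∈ Finset.univ.filter (fun g : G => orderOf g = d), d :=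
        Finset.prod_congr rfl fun g hg => (Finset.mem_filter.mp hg).2
    _ = d ^ d.totient := by rw [Finset.prod_const, hcard]

lemma aux_key5 {x : ℝ} (hx : 5 ≤ x) :
    (x + 1) * Real.log x ≤ Real.log 2 * (x * (x - 1)) := by
  have l5 : Real.log x ≤ Real.log 5 + (x - 5) / 5 := by
    have h1 := Real.log_le_sub_one_of_pos (show (0:ℝ) < x / 5 by linarith)
    rw [Real.log_div (by linarith) (by norm_num)] at h1
    linarith
  have l5b : Real.log 5 ≤ 7 / 3 * Real.log 2 := by
    have h125 : Real.log ((5:ℝ) ^ 3) ≤ Real.log ((2:ℝ) ^ 7) :=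
      Real.log_le_log (by positivity) (by norm_num)
    rw [Real.log_pow, Real.log_pow] at h125
    push_cast at h125
    linarith
  nlinarith [Real.log_two_gt_d9, sq_nonneg (x - 5), Real.log_nonneg (by linarith : (1:ℝ) ≤ x)]

lemma aux_125 : Real.log 5 / 4 ≤ Real.log 2 / 2 + Real.log 3 / 6 := by
  have h : Real.log ((5:ℝ) ^ 3) ≤ Real.log ((2:ℝ) ^ 6 * 3 ^ 2) :=
    Real.log_le_log (by positivity) (by norm_num)
  rw [Real.log_pow, Real.log_mul (by positivity) (by positivity),
    Real.log_pow, Real.log_pow] at h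
  push_cast at h
  linarith

lemma aux_B {n p : ℕ} (hp : p.Prime) (h3 : 3 ≤ p) (hn0 : n ≠ 0)
    (hpd : p ∣ n) (hmin : ∀ q : ℕ, q.Prime → q ∣ n → p ≤ q)
    (hfew : 2 * n.primeFactors.card ≤ p + 1) :
    ∑ q ∈ n.primeFactors, Real.log q / ((q : ℝ) - 1)
      ≤ Real.log 2 / 2 + ((p : ℝ) + 1) / (2 * (p : ℝ)) * Real.log p := by
  have hp4 : p ≠ 4 := by rintro rfl; norm_num at hp
  have hmem : ∀ q ∈ n.primeFactors, q.Prime ∧ p ≤ q := fun q hq =>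
    ⟨(Nat.mem_primeFactors.mp hq).1,
      hmin q (Nat.mem_primeFactors.mp hq).1 (Nat.mem_primeFactors.mp hq).2.1⟩
  rcases (show p = 3 ∨ 5 ≤ p by omega) with hp3 | hp5
  · -- p = 3
    subst hp3
    have h3mem : 3 ∈ n.primeFactors := Nat.mem_primeFactors.mpr ⟨hp, hpd, hn0⟩
    have hk1 : 1 ≤ n.primeFactors.card := Finset.card_pos.mpr ⟨3, h3mem⟩
    have hlog2 : (0:ℝ) ≤ Real.log 2 := Real.log_nonneg (by norm_num)
    have hlog3 : (0:ℝ) ≤ Real.log 3 := Real.log_nonneg (by norm_num)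
    rcases (show n.primeFactors.card = 1 ∨ n.primeFactors.card = 2 by omega) with hk | hk
    · obtain ⟨a, ha⟩ := Finset.card_eq_one.mp hk
      have ha3 : a = 3 := by rw [ha] at h3mem; exact (Finset.mem_singleton.mp h3mem).symm
      subst ha3
      rw [ha, Finset.sum_singleton]
      push_cast
      norm_num
      linarith
    · obtain ⟨a, b, hab, habs⟩ := Finset.card_eq_two.mp hk
      have hq : ∃ q, q ≠ 3 ∧ n.primeFactors = {3, q} := by
        rw [habs] at h3mem
        rcases Finset.mem_insert.mp h3mem with h | h
        · exact ⟨b, by omega, by rw [habs, h]⟩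
        · have hb3 : b = 3 := (Finset.mem_singleton.mp h).symm
          exact ⟨a, by omega, by rw [habs, hb3, Finset.pair_comm]⟩
      obtain ⟨q, hq3, hqs⟩ := hq
      have hqmem : q ∈ n.primeFactors := by rw [hqs]; simp
      obtain ⟨hqp, hq3le⟩ := hmem q hqmem
      have hq4 : q ≠ 4 := by rintro rfl; norm_num at hqp
      have hq5 : 5 ≤ q := by omega
      have hq5r : (5:ℝ) ≤ (q:ℝ) := by exact_mod_cast hq5
      have hbound : Real.log q / ((q:ℝ) - 1) ≤ Real.log 5 / 4 := by
        have := aux_log_antitone (x := 5) (y := (q:ℝ)) (by norm_num) hq5r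
        norm_num at this
        exact this
      rw [hqs, Finset.sum_pair (by omega : (3:ℕ) ≠ q)]
      push_cast
      norm_num
      have h125 := aux_125
      linarith
  · -- 5 ≤ p
    have hp5r : (5:ℝ) ≤ (p:ℝ) := by exact_mod_cast hp5
    have hp3r : (3:ℝ) ≤ (p:ℝ) := by linarith
    have hp1 : (0:ℝ) < (p:ℝ) - 1 := by linarith
    have hp0 : (0:ℝ) < (p:ℝ) := by linarith
    have hlogp : (0:ℝ) ≤ Real.log p := Real.log_nonneg (by linarith)
    have hterm : ∀ q ∈ n.primeFactors,
        Real.log q / ((q:ℝ) - 1) ≤ Real.log p / ((p:ℝ) - 1) := by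
      intro q hq
      obtain ⟨hqp, hqle⟩ := hmem q hq
      exact aux_log_antitone hp3r (by exact_mod_cast hqle)
    have hsum : ∑ q ∈ n.primeFactors, Real.log q / ((q:ℝ) - 1)
        ≤ (n.primeFactors.card : ℝ) * (Real.log p / ((p:ℝ) - 1)) := by
      calc ∑ q ∈ n.primeFactors, Real.log q / ((q:ℝ) - 1)
          ≤ ∑ _q ∈ n.primeFactors, Real.log p / ((p:ℝ) - 1) :=
            Finset.sum_le_sum hterm
        _ = (n.primeFactors.card : ℝ) * (Real.log p / ((p:ℝ) - 1)) := by
            rw [Finset.sum_const, nsmul_eq_mul]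
    have hcard : (n.primeFactors.card : ℝ) ≤ ((p:ℝ) + 1) / 2 := by
      have : (2 * n.primeFactors.card : ℝ) ≤ (p:ℝ) + 1 := by exact_mod_cast hfew
      linarith
    have hmid : (n.primeFactors.card : ℝ) * (Real.log p / ((p:ℝ) - 1))
        ≤ (((p:ℝ) + 1) / 2) * (Real.log p / ((p:ℝ) - 1)) :=
      mul_le_mul_of_nonneg_right hcard (by positivity)
    have hkey := aux_key5 hp5r
    have hfinal : (((p:ℝ) + 1) / 2) * (Real.log p / ((p:ℝ) - 1))
        ≤ Real.log 2 / 2 + ((p:ℝ) + 1) / (2 * (p:ℝ)) * Real.log p := by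
      have hne1 : ((p:ℝ) - 1) ≠ 0 := ne_of_gt hp1
      have hne0 : ((p:ℝ)) ≠ 0 := ne_of_gt hp0
      have expand : (Real.log 2 / 2 + ((p:ℝ) + 1) / (2 * (p:ℝ)) * Real.log p)
          - (((p:ℝ) + 1) / 2) * (Real.log p / ((p:ℝ) - 1))
          = (Real.log 2 * ((p:ℝ) * ((p:ℝ) - 1)) - ((p:ℝ) + 1) * Real.log p)
            / (2 * (p:ℝ) * ((p:ℝ) - 1)) := by
        field_simp
        ring
      have hnum : 0 ≤ (Real.log 2 * ((p:ℝ) * ((p:ℝ) - 1)) - ((p:ℝ) + 1) * Real.log p) := by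
        linarith
      have := div_nonneg hnum (by positivity : (0:ℝ) ≤ 2 * (p:ℝ) * ((p:ℝ) - 1))
      linarith [expand ▸ this]
    linarith

theorem stmt12 (G : Type*) [Group G] [Fintype G] [IsCyclic G] (p : ℕ) (hp : p.Prime)
    (h3 : 3 ≤ p) (hodd : Odd (Fintype.card G)) (hpd : p ∣ Fintype.card G)
    (hmin : ∀ q : ℕ, q.Prime → q ∣ Fintype.card G → p ≤ q)
    (hfew : 2 * (Fintype.card G).primeFactors.card ≤ p + 1) :
    lfun G > (2 : ℝ) ^ (-(1 / 2 : ℝ)) * (p : ℝ) ^ (-(((p : ℝ) + 1) / (2 * (p : ℝ)))) := by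
  classical
  set n : ℕ := Fintype.card G with hn_def
  have hn0 : n ≠ 0 := Fintype.card_ne_zero
  have hpn : p ≤ n := Nat.le_of_dvd (Nat.pos_of_ne_zero hn0) hpd
  have hn1 : 1 < n := by omega
  have hnr : (0:ℝ) < (n:ℝ) := by exact_mod_cast Nat.pos_of_ne_zero hn0
  have hpr : (0:ℝ) < (p:ℝ) := by exact_mod_cast hp.pos
  set ρ : ℕ := ∏ g : G, orderOf g with hρ_def
  have hρpos : 0 < ρ := Finset.prod_pos fun g _ => orderOf_pos g
  have hρr : (0:ℝ) < (ρ:ℝ) := by exact_mod_cast hρpos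
  -- log ρ as a divisor sum
  have hlogρ : Real.log ρ = ∑ d ∈ n.divisors, (d.totient : ℝ) * Real.log d := by
    rw [show ρ = ∏ d ∈ n.divisors, d ^ d.totient from aux_prod_orderOf G]
    push_cast
    rw [Real.log_prod (fun d hd => by
      have hd1 : 1 ≤ d := Nat.pos_of_mem_divisors hd
      have : (0:ℝ) < (d:ℝ) := by exact_mod_cast hd1
      positivity)]
    exact Finset.sum_congr rfl fun d _ => by rw [Real.log_pow]
  set T : ℝ := ∑ d ∈ n.divisors, ((n / d).totient : ℝ) * Real.log d with hT_def
  have hsum_tot : (∑ d ∈ n.divisors, (d.totient:ℝ)) = (n:ℝ) := by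
    rw [← Nat.cast_sum]
    exact_mod_cast congrArg (Nat.cast (R := ℝ)) (Nat.sum_totient n)
  have hT' : ∑ d ∈ n.divisors, (d.totient:ℝ) * Real.log ((n/d : ℕ)) = T := by
    have h := Nat.sum_div_divisors n (fun d => ((n / d).totient : ℝ) * Real.log d)
    rw [hT_def, ← h]
    exact Finset.sum_congr rfl fun d hd => by
      rw [Nat.div_div_self (Nat.mem_divisors.mp hd).1 hn0]
  have hsplit : Real.log ρ = (n:ℝ) * Real.log n - T := by
    have hper : ∀ d ∈ n.divisors, (d.totient : ℝ) * Real.log d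
        = (d.totient : ℝ) * Real.log n - (d.totient : ℝ) * Real.log ((n/d : ℕ)) := by
      intro d hd
      obtain ⟨hdn, -⟩ := Nat.mem_divisors.mp hd
      have hd1 : 1 ≤ d := Nat.pos_of_mem_divisors hd
      have hnd1 : 1 ≤ n / d := Nat.div_pos (Nat.le_of_dvd (by omega) hdn) hd1
      have hmul : (n:ℝ) = (d:ℝ) * ((n/d : ℕ):ℝ) := by
        exact_mod_cast (Nat.mul_div_cancel' hdn).symm
      rw [hmul, Real.log_mul (by exact_mod_cast by omega) (by exact_mod_cast by omega)]
      ring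
    rw [hlogρ, Finset.sum_congr rfl hper, Finset.sum_sub_distrib, ← Finset.sum_mul,
      hsum_tot, hT']
  -- T as a sum over prime factors
  have hTps : T = ∑ q ∈ n.primeFactors,
      ((∑ d ∈ n.divisors, (n / d).totient * d.factorization q : ℕ) : ℝ) * Real.log q := by
    rw [hT_def]
    have h1 : ∀ d ∈ n.divisors, ((n / d).totient : ℝ) * Real.log d
        = ∑ q ∈ n.primeFactors, ((n / d).totient : ℝ) *
            ((d.factorization q : ℝ) * Real.log q) := by
      intro d hd
      rw [aux_log_div hn0 (Nat.mem_divisors.mp hd).1, Finset.mul_sum]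
    rw [Finset.sum_congr rfl h1, Finset.sum_comm]
    refine Finset.sum_congr rfl fun q _ => ?_
    rw [Nat.cast_sum, Finset.sum_mul]
    exact Finset.sum_congr rfl fun d _ => by push_cast; ring
  -- strict upper bound for T
  have hTlt : T < (n:ℝ) * ∑ q ∈ n.primeFactors, Real.log q / ((q:ℝ) - 1) := by
    rw [hTps, Finset.mul_sum]
    refine Finset.sum_lt_sum_of_nonempty (Nat.nonempty_primeFactors.mpr hn1) fun q hq => ?_
    have hS := aux_S_lt hn0 hq
    have hq2 : 2 ≤ q := (Nat.mem_primeFactors.mp hq).1.two_le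
    have hlq : 0 < Real.log q := Real.log_pos (by exact_mod_cast by omega)
    have hq1 : (0:ℝ) < (q:ℝ) - 1 := by
      have : (2:ℝ) ≤ (q:ℝ) := by exact_mod_cast hq2
      linarith
    have hSr : ((q:ℝ) - 1) * ((∑ d ∈ n.divisors, (n / d).totient * d.factorization q : ℕ):ℝ)
        < (n:ℝ) := by
      have h := (Nat.cast_lt (α := ℝ)).mpr hS
      rw [Nat.cast_mul, Nat.cast_sub (by omega)] at h
      exact_mod_cast h
    calc ((∑ d ∈ n.divisors, (n / d).totient * d.factorization q : ℕ):ℝ) * Real.log q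
        < ((n:ℝ) / ((q:ℝ) - 1)) * Real.log q := by
          apply mul_lt_mul_of_pos_right _ hlq
          rw [lt_div_iff₀ hq1, mul_comm]
          exact hSr
      _ = (n:ℝ) * (Real.log q / ((q:ℝ) - 1)) := by ring
  have hB := aux_B hp h3 hn0 hpd hmin hfew
  have hTn : T < (n:ℝ) * (Real.log 2 / 2 + ((p:ℝ) + 1) / (2 * (p:ℝ)) * Real.log p) :=
    lt_of_lt_of_le hTlt (mul_le_mul_of_nonneg_left hB (le_of_lt hnr))
  -- log of lfun
  have hlfun_pos : 0 < lfun G := by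
    rw [lfun]
    positivity
  have hlog_lfun : Real.log (lfun G) = -T / (n:ℝ) := by
    rw [lfun]
    rw [Real.log_div (by positivity) (ne_of_gt hnr), Real.log_rpow hρr, hsplit]
    field_simp
    rw [← hn_def]
    ring
  -- the right-hand side
  set R : ℝ := (2 : ℝ) ^ (-(1 / 2 : ℝ)) * (p : ℝ) ^ (-(((p : ℝ) + 1) / (2 * (p : ℝ)))) with hR_def
  have hRpos : 0 < R := by
    rw [hR_def]
    positivity
  have hlogR : Real.log R = -(Real.log 2 / 2 + ((p:ℝ) + 1) / (2 * (p:ℝ)) * Real.log p) := by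
    rw [hR_def, Real.log_mul (by positivity) (by positivity),
      Real.log_rpow (by norm_num), Real.log_rpow hpr]
    ring
  have hmain : Real.log R < Real.log (lfun G) := by
    rw [hlogR, hlog_lfun]
    rw [neg_div, neg_lt_neg_iff, div_lt_iff₀ hnr]
    linarith [hTn]
  have := Real.exp_lt_exp.mpr hmain
  rwa [Real.exp_log hRpos, Real.exp_log hlfun_pos] at this
end

section
/- Let G be a finite group and p a prime. If l(G) > p^{-1}, then G has a unique Sylow p-subgroup (which is therefore normal), and this Sylow p-subgroup is cyclic. Here l(G) = ρ(G)^(1/|G|)/|G| and ρ(G) is the product of the orders of all elements of G. -/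
-- arithmetic: if o ∣ n and the full p-part of n doesn't divide o, then o*p ∣ n
private lemma aux_mul_p_dvd {p o n : ℕ} (hn : n ≠ 0) (ho : o ∣ n)
    (hpa : ¬ p ^ n.factorization p ∣ o) : o * p ∣ n := by
  obtain ⟨k, hk⟩ := ho
  have ho0 : o ≠ 0 := by rintro rfl; simp at hk; omega
  have hk0 : k ≠ 0 := by rintro rfl; simp at hk; omega
  have hpk : p ∣ k := by
    by_contra hpk
    have hfk : k.factorization p = 0 := Nat.factorization_eq_zero_of_not_dvd hpk
    have : n.factorization p = o.factorization p := by
      rw [hk, Nat.factorization_mul ho0 hk0]; simp [hfk]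
    rw [this] at hpa
    exact hpa (Nat.ordProj_dvd o p)
  obtain ⟨m, hm⟩ := hpk
  exact ⟨m, by rw [hk, hm]; ring⟩

-- analytic step: if all orders are at most n/p then lfun ≤ p⁻¹
private lemma key_bound (G : Type*) [Group G] [Fintype G] (p : ℕ) (hp : 0 < p)
    (hA : ∀ g : G, orderOf g * p ≤ Fintype.card G) :
    lfun G ≤ (p : ℝ)⁻¹ := by
  set n := Fintype.card G with hn
  have hn0 : 0 < n := Fintype.card_pos
  have hnR : (0:ℝ) < n := by exact_mod_cast hn0
  have hpR : (0:ℝ) < p := by exact_mod_cast hp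
  have hprod : ((∏ g : G, orderOf g : ℕ) : ℝ) ≤ ((n : ℝ) / p) ^ n := by
    push_cast
    calc (∏ g : G, (orderOf g : ℝ)) ≤ ∏ _g : G, ((n : ℝ) / p) := by
          apply Finset.prod_le_prod
          · intro g _; positivity
          · intro g _
            rw [le_div_iff₀ hpR]
            exact_mod_cast hA g
      _ = ((n : ℝ) / p) ^ n := by rw [Finset.prod_const, Finset.card_univ]
  have hρ0 : (0:ℝ) ≤ ((∏ g : G, orderOf g : ℕ) : ℝ) := by positivity
  have h1 : ((∏ g : G, orderOf g : ℕ) : ℝ) ^ ((1 : ℝ) / (n : ℝ))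
      ≤ (((n : ℝ) / p) ^ n) ^ ((1 : ℝ) / (n : ℝ)) :=
    Real.rpow_le_rpow hρ0 hprod (by positivity)
  have h2 : (((n : ℝ) / p) ^ n) ^ ((1 : ℝ) / (n : ℝ)) = (n : ℝ) / p := by
    rw [← Real.rpow_natCast ((n:ℝ)/p) n, ← Real.rpow_mul (by positivity)]
    rw [mul_one_div, div_self (by positivity), Real.rpow_one]
  rw [h2] at h1
  calc lfun G = ((∏ g : G, orderOf g : ℕ) : ℝ) ^ ((1 : ℝ) / (n : ℝ)) / (n : ℝ) := rfl
    _ ≤ ((n : ℝ) / p) / n := by gcongr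
    _ = (p : ℝ)⁻¹ := by field_simp

open Subgroup in
-- element whose order is divisible by the full p-part gives a cyclic Sylow it normalizes
private lemma exists_sylow_of_pow {G : Type*} [Group G] [Fintype G] {p : ℕ} [Fact p.Prime]
    {g : G} (hdvd : p ^ (Nat.card G).factorization p ∣ orderOf g) :
    ∃ R : Sylow p G, IsCyclic ↥(R : Subgroup G) ∧ g ∈ (Subgroup.normalizer ((R : Subgroup G) : Set G)) := by
  have hg0 : orderOf g ≠ 0 := (orderOf_pos g).ne'
  set a := (Nat.card G).factorization p with ha
  set m := orderOf g / p ^ a with hm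
  have hord : orderOf (g ^ m) = p ^ a := orderOf_pow_orderOf_div hg0 hdvd
  have hcard : Nat.card ↥(zpowers (g ^ m)) = p ^ a := by
    rw [Nat.card_zpowers, hord]
  refine ⟨Sylow.ofCard (zpowers (g ^ m)) hcard, ?_, ?_⟩
  · show IsCyclic ↥(zpowers (g ^ m))
    refine ⟨⟨⟨g ^ m, mem_zpowers _⟩, ?_⟩⟩
    rintro ⟨x, k, rfl⟩
    exact ⟨k, by ext; simp⟩
  · show g ∈ (normalizer ((zpowers (g ^ m) : Subgroup G) : Set G))
    rw [mem_normalizer_iff]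
    intro x
    constructor
    · rintro ⟨k, rfl⟩
      exact ⟨k, by group⟩
    · rintro ⟨k, hk⟩
      simp only at hk
      have hx : x = g⁻¹ * ((g ^ m) ^ k) * g := by rw [hk]; group
      exact ⟨k, by simp only []; rw [hx]; group⟩

theorem stmt13 (G : Type*) [Group G] [Fintype G] (p : ℕ) [Fact p.Prime]
    (h : lfun G > (p : ℝ)⁻¹) :
    (∀ P Q : Sylow p G, P = Q) ∧
      ∀ P : Sylow p G, (P : Subgroup G).Normal ∧ IsCyclic ↥(P : Subgroup G) := by
  have hp : p.Prime := Fact.out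
  have hn0 : Fintype.card G ≠ 0 := Fintype.card_ne_zero
  have hNG : Nat.card G = Fintype.card G := Nat.card_eq_fintype_card
  -- not all orders are ≤ n/p
  have key : ¬ ∀ g : G, orderOf g * p ≤ Fintype.card G := fun hA =>
    absurd (key_bound G p hp.pos hA) (not_le.mpr h)
  -- uniqueness of Sylow subgroups
  have huniq : ∀ P Q : Sylow p G, P = Q := by
    intro P Q
    by_contra hPQ
    have hnt : Nontrivial (Sylow p G) := ⟨P, Q, hPQ⟩
    have h2 : 2 ≤ Nat.card (Sylow p G) := Finite.one_lt_card_iff_nontrivial.mpr hnt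
    have hmod : Nat.card (Sylow p G) ≡ 1 [MOD p] := card_sylow_modEq_one p G
    have hgep : p + 1 ≤ Nat.card (Sylow p G) := by
      have hd : p ∣ Nat.card (Sylow p G) - 1 :=
        (Nat.modEq_iff_dvd' (by omega)).mp hmod.symm
      have := Nat.le_of_dvd (by omega) hd
      omega
    apply key
    intro g
    by_cases hdvd : p ^ (Nat.card G).factorization p ∣ orderOf g
    · obtain ⟨R, _, hgR⟩ := exists_sylow_of_pow hdvd
      have hle : Subgroup.zpowers g ≤ (Subgroup.normalizer ((R : Subgroup G) : Set G)) :=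
        Subgroup.zpowers_le.mpr hgR
      have hdvdN : orderOf g ∣ Nat.card ↥(Subgroup.normalizer ((R : Subgroup G) : Set G)) := by
        rw [← Nat.card_zpowers g]
        exact Subgroup.card_dvd_of_le hle
      have hindex : Nat.card (Sylow p G) = (Subgroup.normalizer ((R : Subgroup G) : Set G)).index :=
        Sylow.card_eq_index_normalizer R
      have hmul : Nat.card ↥(Subgroup.normalizer ((R : Subgroup G) : Set G)) *
          (Subgroup.normalizer ((R : Subgroup G) : Set G)).index = Nat.card G :=
        Subgroup.card_mul_index _
      have hN0 : 0 < Nat.card ↥(Subgroup.normalizer ((R : Subgroup G) : Set G)) := Nat.card_pos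
      calc orderOf g * p ≤ Nat.card ↥(Subgroup.normalizer ((R : Subgroup G) : Set G)) * p :=
            Nat.mul_le_mul_right p (Nat.le_of_dvd hN0 hdvdN)
        _ ≤ Nat.card ↥(Subgroup.normalizer ((R : Subgroup G) : Set G)) * (Subgroup.normalizer ((R : Subgroup G) : Set G)).index := by
            apply Nat.mul_le_mul_left
            omega
        _ = Nat.card G := hmul
        _ = Fintype.card G := hNG
    · have hn0' : Nat.card G ≠ 0 := by rw [hNG]; exact hn0
      have ho : orderOf g ∣ Nat.card G := by rw [hNG]; exact orderOf_dvd_card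
      have := aux_mul_p_dvd hn0' ho hdvd
      rw [hNG] at this
      exact Nat.le_of_dvd (Nat.pos_of_ne_zero hn0) this
  refine ⟨huniq, fun P => ?_⟩
  -- some element has order divisible by the full p-part
  obtain ⟨g, hg⟩ := not_forall.mp key
  have hgn : Fintype.card G < orderOf g * p := not_le.mp hg
  have hdvd : p ^ (Nat.card G).factorization p ∣ orderOf g := by
    by_contra hdvd
    have hn0' : Nat.card G ≠ 0 := by rw [hNG]; exact hn0
    have ho : orderOf g ∣ Nat.card G := by rw [hNG]; exact orderOf_dvd_card
    have := aux_mul_p_dvd hn0' ho hdvd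
    rw [hNG] at this
    exact absurd (Nat.le_of_dvd (Nat.pos_of_ne_zero hn0) this) (not_le.mpr hgn)
  obtain ⟨R, hRcyc, -⟩ := exists_sylow_of_pow hdvd
  have hPR : P = R := huniq P R
  constructor
  · -- normality: unique Sylow has normalizer of index 1
    have hone : Nat.card (Sylow p G) = 1 := by
      have : Subsingleton (Sylow p G) := ⟨huniq⟩
      exact Nat.card_eq_one_iff_unique.mpr ⟨this, ⟨P⟩⟩
    have hindex : (Subgroup.normalizer ((P : Subgroup G) : Set G)).index = 1 :=
      (Sylow.card_eq_index_normalizer P).symm.trans hone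
    exact Subgroup.normalizer_eq_top_iff.mp (Subgroup.index_eq_one.mp hindex)
  · rw [hPR]; exact hRcyc
end

section
/- Let G be a finite group and p a prime. If ψ''(G) > p^{-1}, then G has a unique Sylow p-subgroup, and this Sylow p-subgroup is cyclic. Here ψ''(G) = (Σ_{g∈G} o(g))/|G|^2. -/
theorem stmt14 (G : Type*) [Group G] [Fintype G] (p : ℕ) [Fact p.Prime]
    (h : psi2 G > (p : ℝ)⁻¹) :
    (∀ P Q : Sylow p G, P = Q) ∧
      ∀ P : Sylow p G, (P : Subgroup G).Normal ∧ IsCyclic ↥(P : Subgroup G) := by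
  classical
  have hp := (Fact.out : p.Prime)
  have hn0 : 0 < Fintype.card G := Fintype.card_pos
  -- Step 1: find an element of big order
  have hg : ∃ g : G, Fintype.card G < p * orderOf g := by
    by_contra hcon
    push_neg at hcon
    have hsum : (∑ g : G, orderOf g) * p ≤ Fintype.card G * Fintype.card G := by
      rw [Finset.sum_mul]
      calc ∑ g : G, orderOf g * p ≤ ∑ _g : G, Fintype.card G :=
            Finset.sum_le_sum fun g _ => by
              rw [mul_comm]; exact hcon g
        _ = Fintype.card G * Fintype.card G := by
            rw [Finset.sum_const, Finset.card_univ, smul_eq_mul]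
    have hreal : ((∑ g : G, orderOf g : ℕ) : ℝ) * p ≤ (Fintype.card G : ℝ) ^ 2 := by
      rw [sq]; exact_mod_cast hsum
    have : psi2 G ≤ (p : ℝ)⁻¹ := by
      rw [psi2, inv_eq_one_div, div_le_div_iff₀ (by positivity) (by exact_mod_cast hp.pos)]
      linarith
    linarith
  obtain ⟨g, hg⟩ := hg
  set C : Subgroup G := Subgroup.zpowers g with hC
  have hcardC : Nat.card C = orderOf g := Nat.card_zpowers g
  have hgpos : 0 < orderOf g := orderOf_pos g
  have hindex : C.index * orderOf g = Fintype.card G := by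
    rw [← hcardC, mul_comm, Subgroup.card_mul_index, Nat.card_eq_fintype_card]
  have hidx_lt : C.index < p := by
    have : C.index * orderOf g < p * orderOf g := by rw [hindex]; exact hg
    exact Nat.lt_of_mul_lt_mul_right this
  have hidx0 : C.index ≠ 0 := by
    intro h0; rw [h0, zero_mul] at hindex; omega
  -- Sylow subgroup of C, mapped into G
  obtain ⟨S⟩ : Nonempty (Sylow p ↥C) := inferInstance
  set T : Subgroup G := (S : Subgroup ↥C).map C.subtype with hT
  have eT := Subgroup.equivMapOfInjective (S : Subgroup ↥C) C.subtype C.subtype_injective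
  have hfac : (Nat.card ↥C).factorization p = (Nat.card G).factorization p := by
    have hGeq : Nat.card G = Nat.card ↥C * C.index := (Subgroup.card_mul_index C).symm
    have hC0 : Nat.card ↥C ≠ 0 := by rw [hcardC]; omega
    have hpnd : ¬ p ∣ C.index := fun hd => absurd (Nat.le_of_dvd (by omega) hd) (by omega)
    rw [hGeq, Nat.factorization_mul hC0 hidx0]
    simp [Nat.factorization_eq_zero_of_not_dvd hpnd]
  have hcardT : Nat.card ↥T = p ^ (Nat.card G).factorization p := by
    rw [← Nat.card_congr eT.toEquiv, S.card_eq_multiplicity, hfac]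
  set T' : Sylow p G := Sylow.ofCard T hcardT with hT'
  have hT'coe : (T' : Subgroup G) = T := rfl
  -- C normalizes T
  have hTC : T ≤ C := Subgroup.map_subtype_le _
  have hcomm : ∀ c ∈ C, ∀ t ∈ C, c * t * c⁻¹ = t := by
    rintro c ⟨m, rfl⟩ t ⟨k, rfl⟩
    have : Commute (g ^ m) (g ^ k) := (Commute.refl g).zpow_zpow m k
    rw [this.eq, mul_inv_cancel_right]
  have hCN : C ≤ Subgroup.normalizer (T : Set G) := by
    intro c hc
    rw [Subgroup.mem_normalizer_iff]
    intro t
    constructor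
    · intro ht
      rw [hcomm c hc t (hTC ht)]; exact ht
    · intro ht
      have htC : t ∈ C := by
        have h1 : c * t * c⁻¹ ∈ C := hTC ht
        have h2 : c⁻¹ * (c * t * c⁻¹) * c ∈ C := C.mul_mem (C.mul_mem (C.inv_mem hc) h1) hc
        simpa [mul_assoc] using h2
      rwa [hcomm c hc t htC] at ht
  -- count Sylow subgroups
  have hcard1 : Nat.card (Sylow p G) = 1 := by
    have h1 : Nat.card (Sylow p G) = (Subgroup.normalizer ((T' : Subgroup G) : Set G)).index :=
      Sylow.card_eq_index_normalizer T'
    have h2 : (Subgroup.normalizer ((T' : Subgroup G) : Set G)).index ∣ C.index := by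
      rw [hT'coe]; exact Subgroup.index_dvd_of_le hCN
    have h3 : Nat.card (Sylow p G) < p := by
      rw [h1]
      exact lt_of_le_of_lt (Nat.le_of_dvd (by omega) h2) hidx_lt
    have h4 := card_sylow_modEq_one p G
    have h5 : Nat.card (Sylow p G) % p = 1 % p := h4
    rw [Nat.mod_eq_of_lt h3, Nat.mod_eq_of_lt hp.one_lt] at h5
    exact h5
  have hsub : Subsingleton (Sylow p G) := (Nat.card_eq_one_iff_unique.mp hcard1).1
  refine ⟨fun P Q => Subsingleton.elim P Q, fun P => ?_⟩
  have hPT : P = T' := Subsingleton.elim P T'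
  constructor
  · -- Normal
    rw [← Subgroup.normalizer_eq_top_iff]
    rw [eq_top_iff]
    intro x _
    have : x • P = P := Subsingleton.elim _ _
    exact Sylow.smul_eq_iff_mem_normalizer.mp this
  · -- Cyclic
    rw [hPT, hT'coe]
    have hCyc : IsCyclic ↥C := ⟨⟨g, Subgroup.mem_zpowers g⟩, fun x => by
      obtain ⟨k, hk⟩ := x.2
      exact ⟨k, Subtype.ext (by simpa using hk)⟩⟩
    haveI := hCyc
    exact isCyclic_of_surjective eT eT.surjective
end

section
/- Let p be an odd prime and G a finite group such that G = PH, where P is a normal Sylow p-subgroup of G with P ≅ C_p, C_G(P) = P, |H| > 1 and P ∩ H = 1. Then l(G) = p^{(-1+p-p|H|)/(p|H|)} · l(H), where l(G) = ρ(G)^(1/|G|)/|G| and ρ(G) is the product of the orders of all elements of G. -/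
theorem stmt15 (G : Type*) [Group G] [Fintype G] (p : ℕ) (hp : p.Prime) (hodd : Odd p)
    (P H : Subgroup G) [P.Normal] [Fintype P] [Fintype H]
    (hcardP : Fintype.card P = p) (hSyl : ¬ p ∣ P.index)
    (hcent : Subgroup.centralizer (P : Set G) = P)
    (hH : 1 < Fintype.card H) (hdisj : P ⊓ H = ⊥) (hjoin : P ⊔ H = ⊤) :
    lfun G = (p : ℝ) ^ ((-1 + (p : ℝ) - (p : ℝ) * (Fintype.card H : ℝ)) /
      ((p : ℝ) * (Fintype.card H : ℝ))) * lfun H := by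
  classical
  have hp1 : 1 < p := hp.one_lt
  set q := Fintype.card H with hq
  -- the map from H to the quotient is an isomorphism
  let f : H →* G ⧸ P := (QuotientGroup.mk' P).comp H.subtype
  have hfinj : Function.Injective f := by
    rw [← MonoidHom.ker_eq_bot_iff]
    ext x
    simp only [MonoidHom.mem_ker, Subgroup.mem_bot, f, MonoidHom.comp_apply,
      QuotientGroup.mk'_apply, Subgroup.coe_subtype, QuotientGroup.eq_one_iff]
    constructor
    · intro hx
      have : (x : G) ∈ P ⊓ H := ⟨hx, x.2⟩
      rw [hdisj, Subgroup.mem_bot] at this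
      exact Subtype.ext this
    · rintro rfl; exact P.one_mem
  have hfsurj : Function.Surjective f := by
    intro c
    obtain ⟨g, rfl⟩ := QuotientGroup.mk_surjective c
    have hg : g ∈ (↑(P ⊔ H) : Set G) := by rw [hjoin]; trivial
    rw [Subgroup.normal_mul] at hg
    obtain ⟨u, hu, h, hh, rfl⟩ := hg
    refine ⟨⟨h, hh⟩, ?_⟩
    show ((h : G) : G ⧸ P) = ((u * h : G) : G ⧸ P)
    rw [QuotientGroup.eq]
    have h2 := Subgroup.Normal.conj_mem ‹P.Normal› u hu h⁻¹
    simpa [mul_assoc] using h2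
  -- cardinalities
  have hcardQ : Fintype.card (G ⧸ P) = q := by
    rw [hq, Fintype.card_congr (Equiv.ofBijective f ⟨hfinj, hfsurj⟩)]
  have hcardG : Fintype.card G = q * p := by
    have := Subgroup.card_eq_card_quotient_mul_card_subgroup P
    simp only [Nat.card_eq_fintype_card] at this
    rw [this, hcardQ, hcardP]
  -- order of elements outside P equals the order of their image in the quotient
  have key : ∀ g : G, g ∉ P → orderOf g = orderOf ((g : G ⧸ P)) := by
    intro g hg
    refine Nat.dvd_antisymm ?_ (orderOf_map_dvd (QuotientGroup.mk' P) g)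
    apply orderOf_dvd_of_pow_eq_one
    by_contra hne
    set n := orderOf ((g : G ⧸ P)) with hn
    have hmem : g ^ n ∈ P := by
      rw [← QuotientGroup.eq_one_iff]
      have hgn : ((g ^ n : G) : G ⧸ P) = ((g : G ⧸ P)) ^ n := rfl
      rw [hgn]
      exact pow_orderOf_eq_one _
    set y : P := ⟨g ^ n, hmem⟩ with hy
    have hy1 : y ≠ 1 := fun h => hne (by simpa [hy, Subtype.ext_iff] using h)
    have hordy : orderOf y = p := by
      have h1 := orderOf_dvd_card (x := y); rw [hcardP] at h1
      rcases hp.eq_one_or_self_of_dvd _ h1 with h | h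
      · exact absurd (orderOf_eq_one_iff.mp h) hy1
      · exact h
    have htop : Subgroup.zpowers y = ⊤ := by
      apply Subgroup.eq_top_of_card_eq
      rw [Nat.card_zpowers, hordy, Nat.card_eq_fintype_card, hcardP]
    have hgP : g ∈ P := by
      rw [← hcent]
      rw [Subgroup.mem_centralizer_iff]
      intro x hx
      have hxz : (⟨x, hx⟩ : P) ∈ Subgroup.zpowers y := htop ▸ Subgroup.mem_top _
      obtain ⟨k, hk⟩ := hxz
      have hxeq : (g ^ n) ^ k = x := congrArg Subtype.val hk
      rw [← hxeq]
      exact (((Commute.refl g).pow_right n).zpow_right k).symm.eq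
    exact hg hgP
  -- fibers of the quotient map have cardinality p
  have hfiber : ∀ c : G ⧸ P,
      (Finset.univ.filter (fun g : G => ((g : G ⧸ P)) = c)).card = p := by
    intro c
    obtain ⟨x, rfl⟩ := QuotientGroup.mk_surjective c
    have he : {g : G // ((g : G ⧸ P)) = ((x : G ⧸ P))} ≃ P :=
      { toFun := fun g => ⟨x⁻¹ * g.1, by
          have := g.2.symm
          rwa [QuotientGroup.eq] at this⟩
        invFun := fun u => ⟨x * u.1, by
          rw [eq_comm, QuotientGroup.eq]
          simpa using u.2⟩
        left_inv := fun g => by ext; simp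
        right_inv := fun u => by ext; simp }
    rw [← Fintype.card_subtype, Fintype.card_congr he, hcardP]
  -- product of orders over P
  have hPprod : ∏ x : P, orderOf x = p ^ (p - 1) := by
    have h1 : ∀ x : P, x ≠ 1 → orderOf x = p := by
      intro x hx
      have hd := orderOf_dvd_card (x := x); rw [hcardP] at hd
      rcases hp.eq_one_or_self_of_dvd _ hd with h | h
      · exact absurd (orderOf_eq_one_iff.mp h) hx
      · exact h
    rw [← Finset.mul_prod_erase Finset.univ _ (Finset.mem_univ (1 : P)), orderOf_one, one_mul]
    rw [Finset.prod_congr rfl fun x hx => h1 x (Finset.ne_of_mem_erase hx)]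
    rw [Finset.prod_const, Finset.card_erase_of_mem (Finset.mem_univ _), Finset.card_univ,
      hcardP]
  have hPset : ∏ g ∈ Finset.univ.filter (· ∈ P), orderOf g = p ^ (p - 1) := by
    rw [← hPprod]
    rw [Finset.prod_subtype (p := fun x => x ∈ P) (Finset.univ.filter (· ∈ P))
      (by simp) orderOf]
    exact Finset.prod_congr rfl fun x _ => Subgroup.orderOf_coe x
  have hQ1 : ∏ g ∈ Finset.univ.filter (· ∈ P), orderOf ((g : G ⧸ P)) = 1 :=
    Finset.prod_eq_one fun g hg => by
      have : ((g : G ⧸ P)) = 1 :=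
        (QuotientGroup.eq_one_iff g).mpr (Finset.mem_filter.mp hg).2
      rw [this, orderOf_one]
  -- the main factorization
  have hsplit : (∏ g : G, orderOf g) = p ^ (p - 1) * (∏ h : H, orderOf h) ^ p := by
    calc ∏ g : G, orderOf g
        = (∏ g ∈ Finset.univ.filter (· ∈ P), orderOf g) *
            ∏ g ∈ Finset.univ.filter (¬ · ∈ P), orderOf g :=
          (Finset.prod_filter_mul_prod_filter_not Finset.univ _ _).symm
      _ = p ^ (p - 1) * ∏ g ∈ Finset.univ.filter (¬ · ∈ P), orderOf ((g : G ⧸ P)) := by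
          rw [hPset]
          congr 1
          exact Finset.prod_congr rfl fun g hg =>
            key g (by simpa using (Finset.mem_filter.mp hg).2)
      _ = p ^ (p - 1) * ((∏ g ∈ Finset.univ.filter (· ∈ P), orderOf ((g : G ⧸ P))) *
            ∏ g ∈ Finset.univ.filter (¬ · ∈ P), orderOf ((g : G ⧸ P))) := by
          rw [hQ1, one_mul]
      _ = p ^ (p - 1) * ∏ g : G, orderOf ((g : G ⧸ P)) := by
          rw [Finset.prod_filter_mul_prod_filter_not]
      _ = p ^ (p - 1) * ∏ c : G ⧸ P, orderOf c ^ p := by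
          rw [Finset.prod_comp (fun c : G ⧸ P => orderOf c) (fun g : G => (g : G ⧸ P))]
          rw [Finset.image_univ_of_surjective (QuotientGroup.mk_surjective)]
          congr 1
          exact Finset.prod_congr rfl fun c _ => by rw [hfiber c]
      _ = p ^ (p - 1) * (∏ c : G ⧸ P, orderOf c) ^ p := by rw [Finset.prod_pow]
      _ = p ^ (p - 1) * (∏ h : H, orderOf h) ^ p := by
          congr 1
          rw [← Equiv.prod_comp (Equiv.ofBijective f ⟨hfinj, hfsurj⟩)
            (fun c : G ⧸ P => orderOf c)]
          congr 1
          exact Finset.prod_congr rfl fun h _ => orderOf_injective f hfinj h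
  -- now the real computation
  set R := ∏ h : H, orderOf h with hR
  have hRpos : 0 < R := Finset.prod_pos fun h _ => orderOf_pos h
  have hp0 : (0 : ℝ) < p := by positivity
  have hq0 : (0 : ℝ) < q := by exact_mod_cast Nat.lt_of_lt_of_le Nat.zero_lt_one hH.le
  have hR0 : (0 : ℝ) < R := by exact_mod_cast hRpos
  unfold lfun
  rw [hsplit, hcardG, ← hq, ← hR]
  have hcast : ((p ^ (p - 1) * R ^ p : ℕ) : ℝ)
      = (p : ℝ) ^ ((p : ℝ) - 1) * (R : ℝ) ^ ((p : ℕ) : ℝ) := by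
    rw [show ((p : ℝ) - 1) = (((p - 1 : ℕ) : ℕ) : ℝ) by
      rw [Nat.cast_sub hp1.le, Nat.cast_one]]
    rw [Real.rpow_natCast, Real.rpow_natCast]
    push_cast
    ring
  rw [hcast]
  push_cast
  rw [Real.mul_rpow (Real.rpow_nonneg hp0.le _) (Real.rpow_nonneg hR0.le _),
    ← Real.rpow_mul hp0.le, ← Real.rpow_mul hR0.le]
  rw [show (p : ℝ) * ((1 : ℝ) / ((q : ℝ) * (p : ℝ))) = 1 / (q : ℝ) by
    field_simp]
  rw [show ((p : ℝ) - 1) * ((1 : ℝ) / ((q : ℝ) * (p : ℝ)))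
      = (-1 + (p : ℝ) - (p : ℝ) * (q : ℝ)) / ((p : ℝ) * (q : ℝ)) + 1 by
    field_simp; ring]
  rw [Real.rpow_add hp0, Real.rpow_one]
  field_simp
end

section
/- Let G be a finite group of order p^a q^b with p, q distinct primes and p odd. If l(G) > 2^{-1/2} · p^{-(p+1)/(2p)}, then G is nilpotent. Here l(G) = ρ(G)^(1/|G|)/|G| and ρ(G) is the product of the orders of all elements of G. -/
lemma aux_pow23 {p : ℕ} (hp3 : 3 ≤ p) : 2 ^ p ≤ p ^ (p - 1) := by
  have h1 : 2 ^ p ≤ 3 ^ (p - 1) := by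
    induction p, hp3 using Nat.le_induction with
    | base => norm_num
    | succ n hn ih =>
      have h2 : 2 ^ (n + 1) = 2 * 2 ^ n := by ring
      have h3 : 3 ^ (n + 1 - 1) = 3 * 3 ^ (n - 1) := by
        rw [Nat.add_sub_cancel]
        conv_lhs => rw [← Nat.sub_add_cancel (by omega : 1 ≤ n), pow_succ]
        ring
      rw [h2, h3]
      calc 2 * 2 ^ n ≤ 2 * 3 ^ (n-1) := by omega
        _ ≤ 3 * 3 ^ (n-1) := by omega
  exact h1.trans (Nat.pow_le_pow_left (by omega) _)

lemma aux_plog {p : ℕ} (hp3 : 3 ≤ p) :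
    (p : ℝ) * Real.log 2 ≤ ((p : ℝ) - 1) * Real.log p := by
  have hnat : (2:ℕ) ^ p ≤ p ^ (p - 1) := aux_pow23 hp3
  have hr : (2:ℝ) ^ p ≤ (p:ℝ) ^ (p-1 : ℕ) := by exact_mod_cast hnat
  have hlog := Real.log_le_log (by positivity) hr
  rw [Real.log_pow, Real.log_pow] at hlog
  have hcast : ((p - 1 : ℕ) : ℝ) = (p : ℝ) - 1 := by
    have h1 : (1:ℕ) ≤ p := by omega
    push_cast [h1]; ring
  rw [hcast] at hlog
  exact hlog

lemma aux_R_le_Lp {p : ℕ} (hp3 : 3 ≤ p) :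
    (1 / 2) * Real.log 2 + (((p : ℝ) + 1) / (2 * (p : ℝ))) * Real.log p ≤ Real.log p := by
  have hp0 : (0:ℝ) < p := by positivity
  have h2p : (0:ℝ) < 2 * p := by positivity
  apply le_of_mul_le_mul_left _ h2p
  have he : (2 * (p:ℝ)) * ((1 / 2) * Real.log 2 + (((p : ℝ) + 1) / (2 * (p : ℝ))) * Real.log p)
      = (p:ℝ) * Real.log 2 + ((p:ℝ) + 1) * Real.log p := by
    field_simp
  rw [he]
  have := aux_plog hp3
  nlinarith [this]

lemma aux_zmod (p aa Q : ℕ) (hp : p.Prime) (ha : 1 ≤ aa) (hQ0 : Q ≠ 0)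
    (hcop : Nat.Coprime Q p) (x : ℤ) (h1 : (p : ℤ) ∣ x - 1)
    (hQ1 : (p : ℤ) ^ aa ∣ x ^ Q - 1) : (p : ℤ) ^ aa ∣ x - 1 := by
  have hM0 : p ^ aa ≠ 0 := pow_ne_zero _ hp.pos.ne'
  haveI : NeZero (p ^ aa) := ⟨hM0⟩
  haveI : NeZero p := ⟨hp.pos.ne'⟩
  haveI : Fact p.Prime := ⟨hp⟩
  set y : ZMod (p ^ aa) := (x : ZMod (p ^ aa)) with hy
  have hyQ : y ^ Q = 1 := by
    have : ((x ^ Q - 1 : ℤ) : ZMod (p ^ aa)) = 0 := by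
      rw [ZMod.intCast_zmod_eq_zero_iff_dvd]
      exact_mod_cast hQ1
    push_cast at this
    linear_combination this
  have hunit : y * y ^ (Q - 1) = 1 := by
    rw [← pow_succ']
    have hQe : Q - 1 + 1 = Q := by omega
    rw [hQe]; exact hyQ
  set ζ : (ZMod (p ^ aa))ˣ := ⟨y, y ^ (Q - 1), hunit, by rw [mul_comm] at hunit; exact hunit⟩ with hζ
  have horderQ : orderOf ζ ∣ Q := by
    apply orderOf_dvd_of_pow_eq_one
    ext
    show y ^ Q = 1
    exact hyQ
  have hdvd : p ∣ p ^ aa := dvd_pow_self p (by omega)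
  set f := ZMod.unitsMap hdvd with hf
  have hker : ζ ∈ f.ker := by
    rw [MonoidHom.mem_ker]
    ext
    show (ZMod.castHom hdvd (ZMod p)) y = 1
    have : ((x - 1 : ℤ) : ZMod p) = 0 := by
      rw [ZMod.intCast_zmod_eq_zero_iff_dvd]; exact_mod_cast h1
    push_cast at this
    rw [hy]
    rw [map_intCast]
    linear_combination this
  -- card of kernel
  have hcard1 : Nat.card f.ker * f.ker.index = Nat.card (ZMod (p ^ aa))ˣ :=
    Subgroup.card_mul_index _
  have hidx : f.ker.index = Nat.card (ZMod p)ˣ := by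
    rw [Subgroup.index_ker]
    have : f.range = ⊤ := MonoidHom.range_eq_top.mpr (ZMod.unitsMap_surjective hdvd)
    rw [this, Subgroup.card_top]
  have hcardM : Nat.card (ZMod (p ^ aa))ˣ = p ^ (aa - 1) * (p - 1) := by
    rw [Nat.card_eq_fintype_card, ZMod.card_units_eq_totient,
      Nat.totient_prime_pow hp (by omega)]
  have hcardp : Nat.card (ZMod p)ˣ = p - 1 := by
    rw [Nat.card_eq_fintype_card, ZMod.card_units_eq_totient, Nat.totient_prime hp]
  have hkcard : Nat.card f.ker = p ^ (aa - 1) := by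
    apply Nat.eq_of_mul_eq_mul_right (show 0 < p - 1 by have := hp.two_le; omega)
    rw [← hcardM, ← hcard1, hidx, hcardp]
  have horderP : orderOf ζ ∣ p ^ (aa - 1) := hkcard ▸ Subgroup.orderOf_dvd_natCard _ hker
  have hord1 : orderOf ζ = 1 := by
    have : orderOf ζ ∣ Nat.gcd Q (p ^ (aa - 1)) := Nat.dvd_gcd horderQ horderP
    rwa [Nat.Coprime.gcd_eq_one (hcop.pow_right _), Nat.dvd_one] at this
  have hζ1 : ζ = 1 := orderOf_eq_one_iff.mp hord1
  have hy1 : y = 1 := by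
    have := congrArg (Units.val) hζ1
    exact this
  have : ((x - 1 : ℤ) : ZMod (p ^ aa)) = 0 := by
    push_cast
    rw [← hy, hy1]; ring
  rw [ZMod.intCast_zmod_eq_zero_iff_dvd] at this
  exact_mod_cast this

lemma aux_analytic (p q a c β : ℕ) (hp : p.Prime) (hq : q.Prime) (hp3 : 3 ≤ p)
    (ha : 1 ≤ a) (hc : 1 ≤ c) :
    ((p : ℝ) ^ a * (q : ℝ) ^ (β + c)) *
        ((1 / 2) * Real.log 2 + (((p : ℝ) + 1) / (2 * (p : ℝ))) * Real.log p)
      ≤ ((p : ℝ) ^ a * (q : ℝ) ^ β) * ((c : ℝ) * Real.log q)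
        + (((p : ℝ) ^ a * (q : ℝ) ^ (β + c)) - (p : ℝ) ^ a * (q : ℝ) ^ β) * ((a : ℝ) * Real.log p)
        + (q : ℝ) ^ β * ((a : ℝ) * Real.log p) := by
  have hp0 : (0 : ℝ) < p := by exact_mod_cast hp.pos
  have hq0 : (0 : ℝ) < q := by exact_mod_cast hq.pos
  have hT0 : (0 : ℝ) < (q : ℝ) ^ β := by positivity
  set X : ℝ := (q : ℝ) ^ c with hX
  set T : ℝ := (q : ℝ) ^ β with hT
  set Pa : ℝ := (p : ℝ) ^ a with hPa
  set L2 : ℝ := Real.log 2 with hL2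
  set Lp : ℝ := Real.log p with hLp
  set Lq : ℝ := Real.log q with hLq
  have hqbc : (q : ℝ) ^ (β + c) = T * X := by rw [pow_add]
  rw [hqbc]
  -- facts
  have hX2 : (2 : ℝ) ≤ X := by
    have : (2:ℕ) ≤ q ^ c := le_trans hq.two_le (Nat.le_self_pow (by omega) q)
    calc (2:ℝ) = ((2:ℕ):ℝ) := by norm_num
    _ ≤ ((q ^ c : ℕ) : ℝ) := by exact_mod_cast this
    _ = X := by push_cast; rfl
  have hL20 : 0 ≤ L2 := Real.log_nonneg (by norm_num)
  have hLp0 : 0 ≤ Lp := Real.log_nonneg (by exact_mod_cast hp.one_lt.le)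
  have hLq0 : 0 ≤ Lq := Real.log_nonneg (by exact_mod_cast hq.one_lt.le)
  have hcLq : L2 ≤ (c : ℝ) * Lq := by
    have h2 : (2:ℝ) ≤ (q:ℝ) ^ c := by
      calc (2:ℝ) ≤ (q:ℝ) := by exact_mod_cast hq.two_le
      _ = (q:ℝ) ^ 1 := (pow_one _).symm
      _ ≤ (q:ℝ) ^ c := pow_le_pow_right₀ (by exact_mod_cast hq.one_lt.le) hc
    have h3 := Real.log_le_log (by norm_num) h2
    rw [Real.log_pow] at h3
    exact h3
  have hkey : (p : ℝ) * L2 ≤ ((p : ℝ) - 1) * Lp := by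
    have hnat : (2:ℕ) ^ p ≤ p ^ (p - 1) := aux_pow23 hp3
    have hr : (2:ℝ) ^ p ≤ (p:ℝ) ^ (p-1 : ℕ) := by exact_mod_cast hnat
    have hlog := Real.log_le_log (by positivity) hr
    rw [Real.log_pow, Real.log_pow] at hlog
    have hcast : ((p - 1 : ℕ) : ℝ) = (p : ℝ) - 1 := by
      have h1 : (1:ℕ) ≤ p := by omega
      push_cast [h1]; ring
    rw [hcast] at hlog
    exact hlog
  -- reduce: divide by T
  rw [show (Pa * (T * X)) * ((1/2) * L2 + (((p:ℝ)+1)/(2*(p:ℝ))) * Lp)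
      = T * ((Pa * X) * ((1/2) * L2 + (((p:ℝ)+1)/(2*(p:ℝ))) * Lp)) by ring,
    show (Pa * T) * ((c:ℝ) * Lq) + (Pa * (T * X) - Pa * T) * ((a:ℝ) * Lp) + T * ((a:ℝ)*Lp)
      = T * (Pa * ((c:ℝ) * Lq) + (Pa * X - Pa) * ((a:ℝ) * Lp) + (a:ℝ)*Lp) by ring]
  apply mul_le_mul_of_nonneg_left _ hT0.le
  -- now multiply by 2p
  have h2p : (0:ℝ) < 2 * p := by positivity
  apply le_of_mul_le_mul_left _ h2p
  have hexpand : (2 * (p:ℝ)) * ((Pa * X) * ((1/2) * L2 + (((p:ℝ)+1)/(2*(p:ℝ))) * Lp))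
      = Pa * X * ((p:ℝ) * L2) + Pa * X * (((p:ℝ)+1) * Lp) := by
    field_simp
  rw [hexpand]
  rcases eq_or_lt_of_le ha with ha1 | ha2
  · -- a = 1
    have hPa1 : Pa = (p : ℝ) := by rw [hPa, ← ha1]; ring
    have haR : (a : ℝ) = 1 := by rw [← ha1]; norm_num
    rw [hPa1, haR]
    nlinarith [mul_nonneg (mul_nonneg hp0.le (by linarith : (0:ℝ) ≤ X - 2))
        (by linarith : (0:ℝ) ≤ ((p:ℝ)-1) * Lp - (p:ℝ) * L2),
      mul_nonneg (mul_nonneg hp0.le hp0.le) (by linarith : (0:ℝ) ≤ (c:ℝ) * Lq - L2)]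
  · -- a ≥ 2
    have ha2R : (2 : ℝ) ≤ (a : ℝ) := by exact_mod_cast ha2
    have hPa0 : (0:ℝ) < Pa := by positivity
    have k1 : X * (p:ℝ) * L2 + X * ((p:ℝ) + 1) * Lp ≤ 2 * (p:ℝ) * ((a:ℝ) * (X - 1)) * Lp := by
      nlinarith [mul_nonneg (by linarith : (0:ℝ) ≤ X - 2) hLp0,
        mul_nonneg (mul_nonneg (by linarith : (0:ℝ) ≤ (a:ℝ) - 2) (by linarith : (0:ℝ) ≤ X - 1)) hLp0,
        mul_nonneg (by linarith : (0:ℝ) ≤ X) (by linarith : (0:ℝ) ≤ ((p:ℝ)-1) * Lp - (p:ℝ) * L2),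
        hp0, hX2]
    have k2 := mul_le_mul_of_nonneg_left k1 hPa0.le
    have e : 2*(p:ℝ) * (Pa * ((c:ℝ)*Lq) + (Pa*X - Pa)*((a:ℝ)*Lp) + (a:ℝ)*Lp)
        - (Pa*X*((p:ℝ)*L2) + Pa*X*(((p:ℝ)+1)*Lp))
        = (Pa*(2*(p:ℝ)*((a:ℝ)*(X-1))*Lp) - Pa*(X*(p:ℝ)*L2 + X*((p:ℝ)+1)*Lp))
          + 2*(p:ℝ)*Pa*((c:ℝ)*Lq) + 2*(p:ℝ)*((a:ℝ)*Lp) := by ring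
    have n1 : (0:ℝ) ≤ 2*(p:ℝ)*Pa*((c:ℝ)*Lq) := by positivity
    have n2 : (0:ℝ) ≤ 2*(p:ℝ)*((a:ℝ)*Lp) := by
      have : (0:ℝ) ≤ (a:ℝ) := by positivity
      positivity
    have k3 : Pa*(X*(p:ℝ)*L2 + X*((p:ℝ)+1)*Lp) ≤ Pa*(2*(p:ℝ)*((a:ℝ)*(X-1))*Lp) := by
      calc Pa*(X*(p:ℝ)*L2 + X*((p:ℝ)+1)*Lp) = Pa * (X*(p:ℝ)*L2 + X*((p:ℝ)+1)*Lp) := rfl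
      _ ≤ Pa * (2*(p:ℝ)*((a:ℝ)*(X-1))*Lp) := k2
    linarith [k3]

lemma aux_gen {G : Type*} [Group G] [Fintype G] (g₀ : G) (N : Subgroup G)
    (hle : N ≤ Subgroup.zpowers g₀) : ∃ h : G, Subgroup.zpowers h = N := by
  classical
  set o := orderOf g₀ with ho
  set s := Nat.card N with hs
  have hs0 : 0 < s := Nat.card_pos
  have hsdvd : s ∣ o := by
    have := Subgroup.card_dvd_of_le hle
    rwa [Nat.card_zpowers] at this
  set d := o / s with hd
  have hds : d * s = o := Nat.div_mul_cancel hsdvd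
  have ho0 : 0 < o := orderOf_pos g₀
  have hd0 : 0 < d := by
    rcases Nat.eq_zero_or_pos d with h | h
    · rw [h] at hds; simp at hds; omega
    · exact h
  have hdvd_do : d ∣ o := ⟨s, hds.symm⟩
  refine ⟨g₀ ^ d, ?_⟩
  have hle2 : N ≤ Subgroup.zpowers (g₀ ^ d) := by
    intro x hx
    have hxz : x ∈ Submonoid.powers g₀ := by
      rw [mem_powers_iff_mem_zpowers]
      exact hle hx
    obtain ⟨k, hk⟩ := hxz
    have hxs : x ^ s = 1 := orderOf_dvd_iff_pow_eq_one.mp (Subgroup.orderOf_dvd_natCard N hx)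
    have hks : o ∣ k * s := by
      apply orderOf_dvd_iff_pow_eq_one.mpr
      simp only at hk
      rw [pow_mul, hk, hxs]
    have hdk : d ∣ k := by
      have h2 : d * s ∣ k * s := hds.symm ▸ hks
      exact (Nat.mul_dvd_mul_iff_right hs0).mp h2
    obtain ⟨k', rfl⟩ := hdk
    simp only at hk
    have hx2 : x = (g₀ ^ d) ^ k' := by rw [← hk, pow_mul]
    rw [hx2]
    exact Subgroup.mem_zpowers_iff.mpr ⟨(k' : ℤ), by rw [zpow_natCast]⟩
  have hcard : Nat.card (Subgroup.zpowers (g₀ ^ d)) = s := by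
    rw [Nat.card_zpowers, orderOf_pow, ← ho, Nat.gcd_comm, Nat.gcd_eq_left hdvd_do, ← hds,
      Nat.mul_div_cancel_left _ hd0]
  have hcard2 : Nat.card (N.subgroupOf (Subgroup.zpowers (g₀ ^ d)))
      = Nat.card (Subgroup.zpowers (g₀ ^ d)) := by
    rw [hcard, Nat.card_congr (Subgroup.subgroupOfEquivOfLe hle2).toEquiv]
  have htop := Subgroup.eq_top_of_card_eq _ hcard2
  rw [Subgroup.subgroupOf_eq_top] at htop
  exact le_antisymm htop hle2

lemma aux_conv {G : Type*} [Group G] [Fintype G] (p : ℕ) (hp : p.Prime)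
    (hl : lfun G > (2 : ℝ) ^ (-(1 / 2 : ℝ)) * (p : ℝ) ^ (-(((p : ℝ) + 1) / (2 * (p : ℝ))))) :
    ∑ g : G, Real.log (((Subgroup.zpowers g).index : ℕ) : ℝ)
      < (Fintype.card G : ℝ) *
        ((1 / 2) * Real.log 2 + (((p : ℝ) + 1) / (2 * (p : ℝ))) * Real.log p) := by
  classical
  set n := Fintype.card G with hn
  have hn0 : 0 < n := Fintype.card_pos
  have hn0R : (0:ℝ) < n := by exact_mod_cast hn0
  have hp0 : (0:ℝ) < p := by exact_mod_cast hp.pos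
  set ρ : ℕ := ∏ g : G, orderOf g with hρ
  have hρ0 : 0 < ρ := Finset.prod_pos (fun g _ => orderOf_pos g)
  have hρR : (0:ℝ) < (ρ : ℝ) := by exact_mod_cast hρ0
  have hb0 : (0:ℝ) < (2 : ℝ) ^ (-(1 / 2 : ℝ)) * (p : ℝ) ^ (-(((p : ℝ) + 1) / (2 * (p : ℝ)))) :=
    mul_pos (Real.rpow_pos_of_pos (by norm_num) _) (Real.rpow_pos_of_pos hp0 _)
  have hlog := Real.log_lt_log hb0 hl
  have hlfun : Real.log (lfun G) = (1 / (n:ℝ)) * Real.log ρ - Real.log n := by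
    rw [lfun, Real.log_div (by positivity) (by positivity), Real.log_rpow hρR]
  have hbnd : Real.log ((2 : ℝ) ^ (-(1 / 2 : ℝ)) * (p : ℝ) ^ (-(((p : ℝ) + 1) / (2 * (p : ℝ)))))
      = -((1/2) * Real.log 2) - ((((p : ℝ) + 1) / (2 * (p : ℝ))) * Real.log p) := by
    rw [Real.log_mul (by positivity) (by positivity), Real.log_rpow (by norm_num),
      Real.log_rpow hp0]
    ring
  rw [hlfun, hbnd] at hlog
  -- per element decomposition
  have hoi : ∀ g : G, (orderOf g) * (Subgroup.zpowers g).index = n := by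
    intro g
    rw [← Nat.card_zpowers, Subgroup.card_mul_index, Nat.card_eq_fintype_card]
  have hidx0 : ∀ g : G, (0:ℝ) < ((Subgroup.zpowers g).index : ℝ) := by
    intro g
    have := Subgroup.index_ne_zero_of_finite (H := Subgroup.zpowers g)
    positivity
  have hper : ∀ g : G, Real.log ((orderOf g : ℕ) : ℝ)
      = Real.log n - Real.log (((Subgroup.zpowers g).index : ℕ) : ℝ) := by
    intro g
    have : (n:ℝ) = (orderOf g : ℝ) * ((Subgroup.zpowers g).index : ℝ) := by
      exact_mod_cast (hoi g).symm
    rw [this, Real.log_mul (by exact_mod_cast (orderOf_pos g).ne') (hidx0 g).ne']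
    ring
  have hlogρ : Real.log ρ = ∑ g : G, Real.log ((orderOf g : ℕ) : ℝ) := by
    rw [hρ, Nat.cast_prod]
    exact Real.log_prod (fun g _ => by exact_mod_cast (orderOf_pos g).ne')
  have hsum : Real.log ρ = (n:ℝ) * Real.log n
      - ∑ g : G, Real.log (((Subgroup.zpowers g).index : ℕ) : ℝ) := by
    rw [hlogρ]
    rw [Finset.sum_congr rfl (fun g _ => hper g), Finset.sum_sub_distrib,
      Finset.sum_const, Finset.card_univ]
    simp [hn]
  rw [hsum] at hlog
  have hstep : (n:ℝ) * (-((1/2) * Real.log 2) - ((((p : ℝ) + 1) / (2 * (p : ℝ))) * Real.log p))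
      < (n:ℝ) * ((1 / (n:ℝ)) * ((n:ℝ) * Real.log n
          - ∑ g : G, Real.log (((Subgroup.zpowers g).index : ℕ) : ℝ)) - Real.log n) :=
    (mul_lt_mul_iff_right₀ hn0R).mpr hlog
  have hsimp : (n:ℝ) * ((1 / (n:ℝ)) * ((n:ℝ) * Real.log n
          - ∑ g : G, Real.log (((Subgroup.zpowers g).index : ℕ) : ℝ)) - Real.log n)
      = - ∑ g : G, Real.log (((Subgroup.zpowers g).index : ℕ) : ℝ) := by
    field_simp
    ring
  rw [hsimp] at hstep
  nlinarith [hstep]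

theorem stmt18 (G : Type*) [Group G] [Fintype G] (p q a b : ℕ) (hp : p.Prime) (hq : q.Prime)
    (hne : p ≠ q) (hpodd : p ≠ 2) (hcard : Fintype.card G = p ^ a * q ^ b)
    (hl : lfun G > (2 : ℝ) ^ (-(1 / 2 : ℝ)) * (p : ℝ) ^ (-(((p : ℝ) + 1) / (2 * (p : ℝ))))) :
    Group.IsNilpotent G := by
  classical
  haveI : Fact p.Prime := ⟨hp⟩
  haveI : Fact q.Prime := ⟨hq⟩
  have hp3 : 3 ≤ p := by have := hp.two_le; rcases this.lt_or_eq with h | h; omega; omega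
  set n := Fintype.card G with hn
  have hn0 : 0 < n := Fintype.card_pos
  have hn0R : (0:ℝ) < (n:ℝ) := by exact_mod_cast hn0
  have hconv := aux_conv p hp hl
  have hidxpos : ∀ g : G, 0 < (Subgroup.zpowers g).index := fun g =>
    Nat.pos_of_ne_zero (Subgroup.index_ne_zero_of_finite)
  by_cases hbig : ∀ g : G, p ≤ (Subgroup.zpowers g).index
  · exfalso
    have hlow : (n:ℝ) * Real.log p
        ≤ ∑ g : G, Real.log (((Subgroup.zpowers g).index : ℕ) : ℝ) := by
      calc (n:ℝ) * Real.log p = ∑ _g : G, Real.log (p:ℝ) := by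
            rw [Finset.sum_const, Finset.card_univ, nsmul_eq_mul, hn]
      _ ≤ _ := by
            apply Finset.sum_le_sum
            intro g _
            apply Real.log_le_log (by exact_mod_cast hp.pos)
            exact_mod_cast hbig g
    have hRL := aux_R_le_Lp hp3
    nlinarith [mul_le_mul_of_nonneg_left hRL hn0R.le]
  · push_neg at hbig
    obtain ⟨g₀, hg₀⟩ := hbig
    set H := Subgroup.zpowers g₀ with hH
    set N := H.normalCore with hNdef
    have hNle : N ≤ H := Subgroup.normalCore_le H
    have hidxfac : N.index ∣ (Nat.factorial H.index) := by
      rw [hNdef, Subgroup.normalCore_eq_ker, Subgroup.index_ker]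
      have h1 : Nat.card (MulAction.toPermHom G (G ⧸ H)).range ∣ Nat.card (Equiv.Perm (G ⧸ H)) :=
        Subgroup.card_subgroup_dvd_card _
      have h2 : Nat.card (Equiv.Perm (G ⧸ H)) = (Nat.factorial H.index) := by
        letI := Fintype.ofFinite (G ⧸ H)
        rw [Nat.card_eq_fintype_card, Fintype.card_perm, ← Nat.card_eq_fintype_card,
          ← Subgroup.index_eq_card]
      rw [← h2]
      exact h1
    have hpnotdvd : ¬ p ∣ N.index := by
      intro hdvd
      have h3 : p ∣ (Nat.factorial H.index) := hdvd.trans hidxfac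
      rw [Nat.Prime.dvd_factorial hp] at h3
      omega
    have hidxn : N.index ∣ n := by
      have := Subgroup.index_dvd_card (H := N)
      rwa [Nat.card_eq_fintype_card] at this
    have hidxq : N.index ∣ q ^ b := by
      have hcop : Nat.Coprime (N.index) (p ^ a) :=
        (((Nat.Prime.coprime_iff_not_dvd hp).mpr hpnotdvd).symm).pow_right a
      exact hcop.dvd_of_dvd_mul_left (by rw [← hcard]; exact hidxn)
    obtain ⟨e, heb, he⟩ := (Nat.dvd_prime_pow hq).mp hidxq
    have hNcard : Nat.card N = p ^ a * q ^ (b - e) := by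
      have h1 : Nat.card N * N.index = n := by
        rw [Subgroup.card_mul_index, Nat.card_eq_fintype_card]
      rw [he] at h1
      have h2 : (p ^ a * q ^ (b - e)) * q ^ e = n := by
        rw [hcard, mul_assoc, ← pow_add, Nat.sub_add_cancel heb]
      exact Nat.eq_of_mul_eq_mul_right (pow_pos hq.pos e) (h1.trans h2.symm)
    obtain ⟨h0, hh0⟩ := aux_gen g₀ N hNle
    have hordh0 : orderOf h0 = p ^ a * q ^ (b - e) := by
      rw [← Nat.card_zpowers, hh0, hNcard]
    set w := h0 ^ (q ^ (b - e)) with hw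
    have hordw : orderOf w = p ^ a := by
      rw [hw, orderOf_pow, hordh0, Nat.gcd_eq_right (dvd_mul_left _ _),
        Nat.mul_div_cancel _ (pow_pos hq.pos _)]
    set P := Subgroup.zpowers w with hP
    have hPnormal : P.Normal := by
      constructor
      intro x hx g
      obtain ⟨sx, hsx⟩ := Subgroup.mem_zpowers_iff.mp hx
      have hh0N : h0 ∈ N := by rw [← hh0]; exact Subgroup.mem_zpowers h0
      have hconj : g * h0 * g⁻¹ ∈ N := Subgroup.Normal.conj_mem inferInstance h0 hh0N g
      rw [← hh0] at hconj
      obtain ⟨j, hj⟩ := Subgroup.mem_zpowers_iff.mp hconj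
      have hgw : g * w * g⁻¹ = w ^ j := by
        rw [hw, ← conj_pow, ← hj, ← zpow_natCast (h0 ^ j) (q ^ (b-e)), ← zpow_mul, mul_comm,
          zpow_mul, zpow_natCast]
      rw [← hsx, ← conj_zpow, hgw, ← zpow_mul]
      exact Subgroup.mem_zpowers_iff.mpr ⟨j * sx, rfl⟩
    haveI := hPnormal
    set C := Subgroup.centralizer (P : Set G) with hC
    have hwP : w ∈ P := Subgroup.mem_zpowers w
    have hPC : P ≤ C := by
      intro x hx
      rw [hC, Subgroup.mem_centralizer_iff]
      intro y hy
      obtain ⟨i, hi⟩ := Subgroup.mem_zpowers_iff.mp hx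
      obtain ⟨j, hj⟩ := Subgroup.mem_zpowers_iff.mp hy
      rw [← hi, ← hj, ← zpow_add, ← zpow_add, add_comm]
    have hCnormal : C.Normal := by
      constructor
      intro x hx g
      rw [hC, Subgroup.mem_centralizer_iff] at hx ⊢
      intro y hy
      have hy' : g⁻¹ * y * g ∈ (P : Set G) := by
        have h5 := hPnormal.conj_mem y hy g⁻¹
        simpa [inv_inv] using h5
      have hxy := hx _ hy'
      calc y * (g * x * g⁻¹) = g * ((g⁻¹ * y * g) * x) * g⁻¹ := by group
      _ = g * (x * (g⁻¹ * y * g)) * g⁻¹ := by rw [hxy]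
      _ = (g * x * g⁻¹) * y := by group
    haveI := hCnormal
    have hPidx : P.index = q ^ b := by
      have h1 : Nat.card P * P.index = n := by
        rw [Subgroup.card_mul_index, Nat.card_eq_fintype_card]
      rw [hP, Nat.card_zpowers, hordw, hcard] at h1
      exact Nat.eq_of_mul_eq_mul_left (pow_pos hp.pos a) h1
    have hCidx_dvd : C.index ∣ q ^ b := hPidx ▸ Subgroup.index_dvd_of_le hPC
    obtain ⟨c, hcb, hc⟩ := (Nat.dvd_prime_pow hq).mp hCidx_dvd
    have hqelt : ∀ g : G, g ∉ C → ¬ p ∣ orderOf g := by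
      intro g hgC hpdvd
      have ho0 : 0 < orderOf g := orderOf_pos g
      have hpz : ((p:ℤ)) ≠ 0 := by exact_mod_cast hp.pos.ne'
      have ha1 : 1 ≤ a := by
        by_contra hlt
        push_neg at hlt
        have ha0 : a = 0 := by omega
        have hw1 : w = 1 := by
          apply orderOf_eq_one_iff.mp
          rw [hordw, ha0, pow_zero]
        apply hgC
        rw [hC, Subgroup.mem_centralizer_iff]
        intro y hy
        obtain ⟨i, hi⟩ := Subgroup.mem_zpowers_iff.mp hy
        rw [← hi, hw1, one_zpow, one_mul, mul_one]
      set u := g ^ (orderOf g / p) with hu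
      have hordu : orderOf u = p := by
        rw [hu, orderOf_pow, Nat.gcd_eq_right (Nat.div_dvd_of_dvd hpdvd),
          Nat.div_div_self hpdvd ho0.ne']
      have hu1 : u ≠ 1 := by
        intro h
        rw [h, orderOf_one] at hordu
        exact hp.one_lt.ne hordu
      have hnd : ¬ p ∣ q ^ b := fun hdq =>
        hne ((Nat.prime_dvd_prime_iff_eq hp hq).mp (hp.dvd_of_dvd_pow hdq))
      have huP : u ∈ P := by
        have h1 : orderOf ((QuotientGroup.mk' P) u) ∣ p := hordu ▸ orderOf_map_dvd _ u
        have h2 : orderOf ((QuotientGroup.mk' P) u) ∣ q ^ b := by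
          have h3 := orderOf_dvd_natCard ((QuotientGroup.mk' P) u)
          rwa [← Subgroup.index_eq_card, hPidx] at h3
        have h4 : (QuotientGroup.mk' P) u = 1 := by
          apply orderOf_eq_one_iff.mp
          rcases (Nat.dvd_prime hp).mp h1 with h | h
          · exact h
          · exact absurd (h ▸ h2) hnd
        rwa [QuotientGroup.mk'_apply, QuotientGroup.eq_one_iff] at h4
      obtain ⟨k, hk⟩ := Subgroup.mem_zpowers_iff.mp huP
      obtain ⟨m, hm⟩ := Subgroup.mem_zpowers_iff.mp (hPnormal.conj_mem w hwP g)
      have hkp : ((p:ℤ))^a ∣ k * p := by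
        have h6 : w ^ (k * (p:ℤ)) = 1 := by
          rw [zpow_mul, hk, zpow_natCast, ← hordu, pow_orderOf_eq_one]
        have h7 := orderOf_dvd_iff_zpow_eq_one.mpr h6
        rw [hordw] at h7
        exact_mod_cast h7
      have hknot : ¬ ((p:ℤ)^a ∣ k) := by
        intro hdvd
        apply hu1
        rw [← hk]
        apply orderOf_dvd_iff_zpow_eq_one.mp
        rw [hordw]
        exact_mod_cast hdvd
      have hsplit : (p:ℤ)^(a-1) ∣ k := by
        have hpow : (p:ℤ)^(a-1) * (p:ℤ) = (p:ℤ)^a := by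
          rw [← pow_succ]
          congr 1
          omega
        have h8 : (p:ℤ)^(a-1) * (p:ℤ) ∣ k * (p:ℤ) := by rw [hpow]; exact hkp
        exact (mul_dvd_mul_iff_right hpz).mp h8
      obtain ⟨j, hj⟩ := hsplit
      have hpj : ¬ ((p:ℤ) ∣ j) := by
        intro hdvd
        obtain ⟨j', hj'⟩ := hdvd
        apply hknot
        have hpow : (p:ℤ)^a = (p:ℤ)^(a-1) * (p:ℤ) := by
          rw [← pow_succ]
          congr 1
          omega
        rw [hj, hj', hpow]
        exact ⟨j', by ring⟩
      have hcommu : g * u * g⁻¹ = u := by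
        have hcomm : Commute g u := (Commute.refl g).pow_right _
        rw [hcomm.eq, mul_inv_cancel_right]
      have hmk : w ^ (m * k) = w ^ k := by
        calc w ^ (m * k) = (w ^ m) ^ k := by rw [zpow_mul]
        _ = (g * w * g⁻¹) ^ k := by rw [hm]
        _ = g * w ^ k * g⁻¹ := conj_zpow
        _ = g * u * g⁻¹ := by rw [hk]
        _ = u := hcommu
        _ = w ^ k := hk.symm
      have hdvdk : (p:ℤ)^a ∣ k * (m - 1) := by
        have h9 : w ^ (k * (m-1)) = 1 := by
          have he2 : k * (m - 1) = m * k - k := by ring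
          rw [he2, zpow_sub, hmk]
          simp
        have h10 := orderOf_dvd_iff_zpow_eq_one.mpr h9
        rw [hordw] at h10
        exact_mod_cast h10
      have hpm1 : (p:ℤ) ∣ m - 1 := by
        rw [hj] at hdvdk
        have hpow : (p:ℤ)^(a-1) * (p:ℤ) = (p:ℤ)^a := by
          rw [← pow_succ]
          congr 1
          omega
        have h11 : (p:ℤ)^(a-1) * (p:ℤ) ∣ (p:ℤ)^(a-1) * (j * (m-1)) := by
          rw [hpow]
          have he3 : (p:ℤ)^(a-1) * (j * (m-1)) = (p:ℤ)^(a-1) * j * (m-1) := by ring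
          rw [he3]
          exact hdvdk
        have h12 : (p:ℤ) ∣ j * (m-1) :=
          (mul_dvd_mul_iff_left (pow_ne_zero (a-1) hpz)).mp h11
        have hprime : Prime (p:ℤ) := Nat.prime_iff_prime_int.mp hp
        rcases hprime.dvd_mul.mp h12 with h | h
        · exact absurd h hpj
        · exact h
      have hgQ : g ^ C.index ∈ C := Subgroup.pow_index_mem C g
      have hconjpow : ∀ t : ℕ, g ^ t * w * (g ^ t)⁻¹ = w ^ (m ^ t) := by
        intro t
        induction t with
        | zero => simp
        | succ t ih =>
          have hstep : g ^ (t+1) * w * (g ^ (t+1))⁻¹ = g * (g ^ t * w * (g ^ t)⁻¹) * g⁻¹ := by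
            group
          rw [hstep, ih]
          calc g * w ^ (m ^ t) * g⁻¹ = (g * w * g⁻¹) ^ (m ^ t) := conj_zpow.symm
          _ = (w ^ m) ^ (m ^ t) := by rw [hm]
          _ = w ^ (m ^ (t+1)) := by
              rw [← zpow_mul]
              congr 1
              rw [pow_succ]
              ring
      have hmQ : (p:ℤ)^a ∣ m ^ C.index - 1 := by
        have hcent : w * g ^ C.index = g ^ C.index * w := by
          rw [hC, Subgroup.mem_centralizer_iff] at hgQ
          exact hgQ w hwP
        have h13 : g ^ C.index * w * (g ^ C.index)⁻¹ = w := by rw [← hcent]; group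
        rw [hconjpow C.index] at h13
        have h14 : w ^ (m ^ C.index - 1) = 1 := by
          rw [zpow_sub, h13, zpow_one]
          simp
        have h15 := orderOf_dvd_iff_zpow_eq_one.mpr h14
        rw [hordw] at h15
        exact_mod_cast h15
      have hQ0 : C.index ≠ 0 := Subgroup.index_ne_zero_of_finite
      have hQcop : Nat.Coprime C.index p := by
        have hnotp : ¬ p ∣ C.index := fun h => hnd (h.trans hCidx_dvd)
        exact (Nat.coprime_comm.mp ((Nat.Prime.coprime_iff_not_dvd hp).mpr hnotp))
      have hfinal := aux_zmod p a C.index hp ha1 hQ0 hQcop m hpm1 hmQ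
      have hwm : w ^ m = w := by
        have h16 : w ^ (m - 1) = 1 := by
          apply orderOf_dvd_iff_zpow_eq_one.mp
          rw [hordw]
          exact_mod_cast hfinal
        calc w ^ m = w ^ (m - 1 + 1) := by congr 1; ring
        _ = w ^ (m-1) * w := by rw [zpow_add_one]
        _ = w := by rw [h16, one_mul]
      apply hgC
      rw [hC, Subgroup.mem_centralizer_iff]
      intro y hy
      obtain ⟨i, hi⟩ := Subgroup.mem_zpowers_iff.mp hy
      have hgy : g * y * g⁻¹ = y := by
        calc g * y * g⁻¹ = g * w ^ i * g⁻¹ := by rw [hi]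
        _ = (g * w * g⁻¹) ^ i := conj_zpow.symm
        _ = (w ^ m) ^ i := by rw [hm]
        _ = w ^ (m * i) := by rw [zpow_mul]
        _ = (w ^ m) ^ i := by rw [zpow_mul]
        _ = w ^ i := by rw [hwm]
        _ = y := hi
      calc y * g = (g * y * g⁻¹) * g := by rw [hgy]
      _ = g * y := by group
    by_cases hCtop : C = ⊤
    · -- nilpotent case
      have hPcenter : P ≤ Subgroup.center G := by
        intro x hx
        rw [Subgroup.mem_center_iff]
        intro g
        have hg : g ∈ C := hCtop ▸ Subgroup.mem_top g
        rw [hC, Subgroup.mem_centralizer_iff] at hg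
        exact (hg x hx).symm
      set Z := Subgroup.center G with hZ
      have hpaZ : p ^ a ∣ Nat.card Z := by
        have h6 := Subgroup.card_dvd_of_le hPcenter
        rwa [hP, Nat.card_zpowers, hordw] at h6
      obtain ⟨dz, hdz⟩ := hpaZ
      have hZidx : Nat.card Z * Z.index = n := by
        rw [Subgroup.card_mul_index, Nat.card_eq_fintype_card]
      have hzq : Z.index ∣ q ^ b := by
        refine Dvd.intro_left dz ?_
        have h7 : p ^ a * (dz * Z.index) = p ^ a * q ^ b := by
          rw [← mul_assoc, ← hdz, hZidx, hcard]
        exact (Nat.eq_of_mul_eq_mul_left (pow_pos hp.pos a) h7)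
      obtain ⟨f, hfb, hf⟩ := (Nat.dvd_prime_pow hq).mp hzq
      have hqgrp : IsPGroup q (G ⧸ Z) := by
        apply IsPGroup.of_card (n := f)
        exact hf
      haveI hnilq : Group.IsNilpotent (G ⧸ Z) := hqgrp.isNilpotent
      exact of_quotient_center_nilpotent hnilq
    · exfalso
      have hc1 : 1 ≤ c := by
        rcases Nat.eq_zero_or_pos c with h0 | h
        · exfalso
          apply hCtop
          apply Subgroup.index_eq_one.mp
          rw [hc, h0, pow_zero]
        · exact h
      have ha1 : 1 ≤ a := by
        by_contra hlt
        push_neg at hlt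
        have ha0 : a = 0 := by omega
        apply hCtop
        have hw1 : w = 1 := orderOf_eq_one_iff.mp (by rw [hordw, ha0, pow_zero])
        rw [Subgroup.eq_top_iff']
        intro g
        rw [hC, Subgroup.mem_centralizer_iff]
        intro y hy
        obtain ⟨i, hi⟩ := Subgroup.mem_zpowers_iff.mp hy
        rw [← hi, hw1, one_zpow, one_mul, mul_one]
      have hCcard : Nat.card C = p ^ a * q ^ (b - c) := by
        have h1 : Nat.card C * C.index = n := by
          rw [Subgroup.card_mul_index, Nat.card_eq_fintype_card]
        rw [hc] at h1
        have h2 : (p ^ a * q ^ (b - c)) * q ^ c = n := by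
          rw [hcard, mul_assoc, ← pow_add, Nat.sub_add_cancel hcb]
        exact Nat.eq_of_mul_eq_mul_right (pow_pos hq.pos c) (h1.trans h2.symm)
      obtain ⟨Q'⟩ := (inferInstance : Nonempty (Sylow q ↥C))
      have hQ'card : Nat.card ↥(Q' : Subgroup ↥C) = q ^ (b - c) := by
        rw [Q'.card_eq_multiplicity, hCcard]
        congr 1
        rw [Nat.factorization_mul (pow_ne_zero _ hp.pos.ne') (pow_ne_zero _ hq.pos.ne'),
          Nat.Prime.factorization_pow hp, Nat.Prime.factorization_pow hq]
        simp [Finsupp.single_apply, hne]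
      set Q2 := Subgroup.map C.subtype (Q' : Subgroup ↥C) with hQ2def
      have hQ2card : Nat.card Q2 = q ^ (b - c) := by
        rw [← hQ'card]
        exact (Nat.card_congr
          (Subgroup.equivMapOfInjective _ _ (Subgroup.subtype_injective C)).toEquiv).symm
      have hQ2C : Q2 ≤ C := Subgroup.map_subtype_le _
      have hp0R : (0:ℝ) < (p:ℝ) := by exact_mod_cast hp.pos
      have hq0R : (0:ℝ) < (q:ℝ) := by exact_mod_cast hq.pos
      have hb1 : ∀ g : G, g ∈ C →
          (c:ℝ) * Real.log q ≤ Real.log (((Subgroup.zpowers g).index : ℕ) : ℝ) := by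
        intro g hg
        have hdvd : q ^ c ∣ (Subgroup.zpowers g).index :=
          hc ▸ Subgroup.index_dvd_of_le (Subgroup.zpowers_le.mpr hg)
        have hle : (q:ℝ)^c ≤ ((Subgroup.zpowers g).index : ℝ) := by
          exact_mod_cast Nat.le_of_dvd (hidxpos g) hdvd
        calc (c:ℝ) * Real.log q = Real.log ((q:ℝ)^c) := by rw [Real.log_pow]
        _ ≤ _ := Real.log_le_log (by positivity) hle
      have hb2 : ∀ g : G, g ∉ C →
          (a:ℝ) * Real.log p ≤ Real.log (((Subgroup.zpowers g).index : ℕ) : ℝ) := by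
        intro g hg
        have hog : orderOf g ∣ q ^ b := by
          have hcop : Nat.Coprime (orderOf g) (p ^ a) :=
            (((Nat.Prime.coprime_iff_not_dvd hp).mpr (hqelt g hg)).symm).pow_right a
          exact hcop.dvd_of_dvd_mul_left (by rw [← hcard]; exact orderOf_dvd_card)
        obtain ⟨dd, hdd⟩ := hog
        have hdvd : p ^ a ∣ (Subgroup.zpowers g).index := by
          have h1 : orderOf g * (Subgroup.zpowers g).index = n := by
            rw [← Nat.card_zpowers, Subgroup.card_mul_index, Nat.card_eq_fintype_card]
          have h2 : orderOf g * (p ^ a * dd) = n := by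
            rw [hcard, hdd]; ring
          exact ⟨dd, Nat.eq_of_mul_eq_mul_left (orderOf_pos g) (h1.trans h2.symm)⟩
        have hle : (p:ℝ)^a ≤ ((Subgroup.zpowers g).index : ℝ) := by
          exact_mod_cast Nat.le_of_dvd (hidxpos g) hdvd
        calc (a:ℝ) * Real.log p = Real.log ((p:ℝ)^a) := by rw [Real.log_pow]
        _ ≤ _ := Real.log_le_log (by positivity) hle
      have hb3 : ∀ g : G, g ∈ Q2 →
          (c:ℝ) * Real.log q + (a:ℝ) * Real.log p
            ≤ Real.log (((Subgroup.zpowers g).index : ℕ) : ℝ) := by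
        intro g hg
        have hog : orderOf g ∣ q ^ (b - c) := hQ2card ▸ Subgroup.orderOf_dvd_natCard Q2 hg
        obtain ⟨dd, hdd⟩ := hog
        have hdvd : p ^ a * q ^ c ∣ (Subgroup.zpowers g).index := by
          have h1 : orderOf g * (Subgroup.zpowers g).index = n := by
            rw [← Nat.card_zpowers, Subgroup.card_mul_index, Nat.card_eq_fintype_card]
          have h2 : orderOf g * ((p ^ a * q ^ c) * dd) = n := by
            rw [hcard]
            calc orderOf g * ((p ^ a * q ^ c) * dd)
                = p ^ a * ((orderOf g * dd) * q ^ c) := by ring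
            _ = p ^ a * (q ^ (b-c) * q ^ c) := by rw [← hdd]
            _ = p ^ a * q ^ b := by rw [← pow_add, Nat.sub_add_cancel hcb]
          exact ⟨dd, Nat.eq_of_mul_eq_mul_left (orderOf_pos g) (h1.trans h2.symm)⟩
        have hle : (p:ℝ)^a * (q:ℝ)^c ≤ ((Subgroup.zpowers g).index : ℝ) := by
          have h3 := Nat.le_of_dvd (hidxpos g) hdvd
          exact_mod_cast h3
        calc (c:ℝ) * Real.log q + (a:ℝ) * Real.log p
            = Real.log ((p:ℝ)^a * (q:ℝ)^c) := by
              rw [Real.log_mul (by positivity) (by positivity), Real.log_pow, Real.log_pow]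
              ring
        _ ≤ _ := Real.log_le_log (by positivity) hle
      have hBF : ∀ g : G,
          (if g ∈ C then (c:ℝ) * Real.log q else (a:ℝ) * Real.log p)
            + (if g ∈ Q2 then (a:ℝ) * Real.log p else 0)
          ≤ Real.log (((Subgroup.zpowers g).index : ℕ) : ℝ) := by
        intro g
        by_cases hgC2 : g ∈ C
        · by_cases hgQ2 : g ∈ Q2
          · rw [if_pos hgC2, if_pos hgQ2]
            exact hb3 g hgQ2
          · rw [if_pos hgC2, if_neg hgQ2, add_zero]
            exact hb1 g hgC2
        · have hgQ2 : g ∉ Q2 := fun h => hgC2 (hQ2C h)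
          rw [if_neg hgC2, if_neg hgQ2, add_zero]
          exact hb2 g hgC2
      have hsumB : ∑ g : G, ((if g ∈ C then (c:ℝ) * Real.log q else (a:ℝ) * Real.log p)
            + (if g ∈ Q2 then (a:ℝ) * Real.log p else 0))
          ≤ ∑ g : G, Real.log (((Subgroup.zpowers g).index : ℕ) : ℝ) :=
        Finset.sum_le_sum (fun g _ => hBF g)
      have hcardC_le : Nat.card C ≤ n := by
        apply Nat.le_of_dvd hn0
        rw [hn, ← Nat.card_eq_fintype_card]
        exact Subgroup.card_subgroup_dvd_card C
      have h1 : ∑ g : G, (if g ∈ C then (c:ℝ) * Real.log q else (a:ℝ) * Real.log p)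
          = (Nat.card C : ℝ) * ((c:ℝ) * Real.log q)
            + ((n:ℝ) - Nat.card C) * ((a:ℝ) * Real.log p) := by
        rw [Finset.sum_ite, Finset.sum_const, Finset.sum_const]
        have hc1' : (Finset.univ.filter (fun g : G => g ∈ C)).card = Nat.card C := by
          rw [Nat.card_eq_fintype_card]
          exact (Fintype.card_subtype _).symm
        have htot := Finset.card_filter_add_card_filter_not
          (s := (Finset.univ : Finset G)) (p := fun g : G => g ∈ C)
        rw [Finset.card_univ] at htot
        have hc2' : (Finset.univ.filter (fun g : G => ¬ g ∈ C)).card = n - Nat.card C := by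
          omega
        rw [hc1', hc2', nsmul_eq_mul, nsmul_eq_mul, Nat.cast_sub hcardC_le]
      have h2 : ∑ g : G, (if g ∈ Q2 then (a:ℝ) * Real.log p else 0)
          = (Nat.card Q2 : ℝ) * ((a:ℝ) * Real.log p) := by
        rw [Finset.sum_ite, Finset.sum_const, Finset.sum_const, smul_zero, add_zero,
          nsmul_eq_mul]
        have hq1' : (Finset.univ.filter (fun g : G => g ∈ Q2)).card = Nat.card Q2 := by
          rw [Nat.card_eq_fintype_card]
          exact (Fintype.card_subtype _).symm
        rw [hq1']
      have hana := aux_analytic p q a c (b - c) hp hq hp3 ha1 hc1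
      have hcastn : (n:ℝ) = (p:ℝ)^a * (q:ℝ)^((b-c)+c) := by
        rw [hcard]
        push_cast
        rw [Nat.sub_add_cancel hcb]
      have e1 : (Nat.card C : ℝ) = (p:ℝ)^a * (q:ℝ)^(b-c) := by
        rw [hCcard]; push_cast; ring
      have e2 : (Nat.card Q2 : ℝ) = (q:ℝ)^(b-c) := by
        rw [hQ2card]; push_cast; ring
      have hfin : (n:ℝ) * ((1/2) * Real.log 2 + (((p:ℝ)+1)/(2*(p:ℝ))) * Real.log p)
          ≤ ∑ g : G, ((if g ∈ C then (c:ℝ) * Real.log q else (a:ℝ) * Real.log p)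
            + (if g ∈ Q2 then (a:ℝ) * Real.log p else 0)) := by
        rw [Finset.sum_add_distrib, h1, h2, e1, e2, hcastn]
        exact hana
      rw [← hn] at hconv
      linarith [hsumB, hconv, hfin]
end

section
/- Let G be a finite group of odd order and let p be the smallest prime divisor of |G|. If l(G) > 2^{-1/2} · p^{-(p+1)/(2p)}, then G is cyclic. Here l(G) = ρ(G)^(1/|G|)/|G| and ρ(G) is the product of the orders of all elements of G. -/
lemma nat_pow_ineq (p : ℕ) (hp : 3 ≤ p) : 2 ^ p ≤ p ^ (p - 1) := by
  obtain ⟨k, rfl⟩ : ∃ k, p = k + 3 := ⟨p - 3, by omega⟩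
  calc 2 ^ (k + 3) = 2 ^ k * 8 := by ring
    _ ≤ 3 ^ k * 9 := Nat.mul_le_mul (Nat.pow_le_pow_left (by norm_num) k) (by norm_num)
    _ = 3 ^ (k + 2) := by ring
    _ ≤ (k + 3) ^ (k + 2) := Nat.pow_le_pow_left (by omega) _
    _ = (k + 3) ^ (k + 3 - 1) := by congr 1

lemma real_ineq (p : ℕ) (hp : 3 ≤ p) :
    (1 : ℝ) / p ≤ (2 : ℝ) ^ (-(1 / 2 : ℝ)) * (p : ℝ) ^ (-(((p : ℝ) + 1) / (2 * (p : ℝ)))) := by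
  have hp0 : (0:ℝ) < p := by positivity
  have hpne : (p:ℝ) ≠ 0 := ne_of_gt hp0
  have key : (2 : ℝ) ^ ((1 / 2 : ℝ)) * (p : ℝ) ^ ((((p : ℝ) + 1) / (2 * (p : ℝ)))) ≤ p := by
    have hsq : (2 : ℝ) ^ ((1 / 2 : ℝ)) ≤ (p : ℝ) ^ ((((p : ℝ) - 1) / (2 * (p : ℝ)))) := by
      have hnat : ((2:ℝ)) ^ (p:ℕ) ≤ ((p:ℝ)) ^ ((p - 1 : ℕ)) := by
        exact_mod_cast nat_pow_ineq p hp
      have h2 : (2:ℝ) ^ ((1:ℝ)/2) = ((2:ℝ) ^ (p:ℕ)) ^ ((1:ℝ)/(2*p)) := by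
        rw [← Real.rpow_natCast 2 p, ← Real.rpow_mul (by norm_num)]
        congr 1
        field_simp
      have h3 : ((p:ℝ)) ^ ((((p : ℝ) - 1) / (2 * (p : ℝ)))) = ((p:ℝ) ^ ((p - 1 : ℕ))) ^ ((1:ℝ)/(2*p)) := by
        rw [← Real.rpow_natCast (p:ℝ) (p-1), ← Real.rpow_mul (le_of_lt hp0)]
        congr 1
        rw [Nat.cast_sub (by omega : 1 ≤ p)]
        push_cast
        field_simp
      rw [h2, h3]
      exact Real.rpow_le_rpow (by positivity) hnat (by positivity)
    calc (2 : ℝ) ^ ((1 / 2 : ℝ)) * (p : ℝ) ^ ((((p : ℝ) + 1) / (2 * (p : ℝ))))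
        ≤ (p : ℝ) ^ ((((p : ℝ) - 1) / (2 * (p : ℝ)))) * (p : ℝ) ^ ((((p : ℝ) + 1) / (2 * (p : ℝ)))) := by
          exact mul_le_mul_of_nonneg_right hsq (by positivity)
      _ = (p:ℝ) ^ ((((p : ℝ) - 1) / (2 * (p : ℝ))) + (((p : ℝ) + 1) / (2 * (p : ℝ)))) := by
          rw [← Real.rpow_add hp0]
      _ = (p:ℝ) ^ (1:ℝ) := by congr 1; field_simp; ring
      _ = p := Real.rpow_one _
  rw [Real.rpow_neg (by norm_num), Real.rpow_neg (le_of_lt hp0), ← mul_inv,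
    div_eq_mul_inv, one_mul]
  exact inv_anti₀ (by positivity) key

lemma order_bound {G : Type*} [Group G] [Fintype G] (p : ℕ) (hp : p.Prime)
    (hmin : ∀ q : ℕ, q.Prime → q ∣ Fintype.card G → p ≤ q)
    (hnc : ¬ IsCyclic G) (g : G) : orderOf g ≤ Fintype.card G / p := by
  set n := Fintype.card G with hn
  have hn0 : 0 < n := Fintype.card_pos
  have ho : orderOf g ∣ n := orderOf_dvd_card
  have hone : orderOf g ≠ n := fun h =>
    hnc (isCyclic_of_orderOf_eq_card g (by rw [Nat.card_eq_fintype_card]; exact h))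
  obtain ⟨k, hk⟩ := ho
  have hk0 : 0 < k := by
    rcases Nat.eq_zero_or_pos k with h | h
    · simp [h] at hk; omega
    · exact h
  have hk1 : k ≠ 1 := by
    intro h; rw [h, mul_one] at hk; exact hone hk.symm
  have hkd : k ∣ n := ⟨orderOf g, by rw [hk]; ring⟩
  have hq := hmin k.minFac (Nat.minFac_prime hk1) (dvd_trans (Nat.minFac_dvd k) hkd)
  have hpk : p ≤ k := le_trans hq (Nat.minFac_le hk0)
  have : orderOf g = n / k := by rw [hk]; rw [Nat.mul_div_cancel _ hk0]
  rw [this]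
  exact Nat.div_le_div_left hpk hp.pos

theorem stmt19 (G : Type*) [Group G] [Fintype G] (p : ℕ) (hp : p.Prime)
    (hodd : Odd (Fintype.card G)) (hpd : p ∣ Fintype.card G)
    (hmin : ∀ q : ℕ, q.Prime → q ∣ Fintype.card G → p ≤ q)
    (hl : lfun G > (2 : ℝ) ^ (-(1 / 2 : ℝ)) * (p : ℝ) ^ (-(((p : ℝ) + 1) / (2 * (p : ℝ))))) :
    IsCyclic G := by
  by_contra hnc
  set n := Fintype.card G with hn
  have hn0 : 0 < n := Fintype.card_pos
  have hp3 : 3 ≤ p := by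
    rcases hp.eq_two_or_odd' with h2 | hoddp
    · exfalso
      rw [h2] at hpd
      rcases hodd with ⟨m, hm⟩
      omega
    · have := hp.two_le
      rcases hoddp with ⟨m, hm⟩
      omega
  -- product bound
  have hprod : (∏ g : G, orderOf g) ≤ (n / p) ^ n := by
    calc (∏ g : G, orderOf g) ≤ ∏ _g : G, (n / p) :=
          Finset.prod_le_prod' (fun g _ => order_bound p hp hmin hnc g)
      _ = (n / p) ^ n := by rw [Finset.prod_const, Finset.card_univ]
  have hm : ((n / p : ℕ) : ℝ) = (n : ℝ) / p := by
    rw [Nat.cast_div hpd (by exact_mod_cast hp.pos.ne')]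
  have hle : lfun G ≤ 1 / p := by
    have h1 : ((∏ g : G, orderOf g : ℕ) : ℝ) ^ ((1 : ℝ) / n) ≤ ((n / p : ℕ) : ℝ) := by
      have := Real.rpow_le_rpow (by positivity)
        (show ((∏ g : G, orderOf g : ℕ) : ℝ) ≤ (((n / p) ^ n : ℕ) : ℝ) by exact_mod_cast hprod)
        (show (0:ℝ) ≤ 1 / n by positivity)
      refine le_trans this (le_of_eq ?_)
      push_cast
      rw [← Real.rpow_natCast ((n/p : ℕ):ℝ) n, ← Real.rpow_mul (by positivity)]
      rw [mul_one_div, div_self (by exact_mod_cast hn0.ne'), Real.rpow_one]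
    unfold lfun
    rw [← hn]
    rw [div_le_div_iff₀ (by exact_mod_cast hn0) (by positivity)]
    calc ((∏ g : G, orderOf g : ℕ) : ℝ) ^ ((1 : ℝ) / n) * p
        ≤ ((n / p : ℕ) : ℝ) * p := by
          exact mul_le_mul_of_nonneg_right h1 (by positivity)
      _ = (n : ℝ) / p * p := by rw [hm]
      _ = (n : ℝ) := div_mul_cancel₀ _ (by positivity)
      _ = 1 * n := (one_mul _).symm
  have := real_ineq p hp3
  linarith
end
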